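/- arXiv:1509.02841 — 3 statements merged into one kernel-verified Lean document; each statement's English description precedes it below -/
import Mathlib

section
/- Let G be a strongly connected directed graph and let (x,y) be an edge of G. If G \ (x,y) contains two edge-disjoint directed paths from x to y, then for every pair of vertices u, w that are 2-edge-connected in G (i.e., there are two edge-disjoint paths from u to w and two edge-disjoint paths from w to u), u and w remain 2-edge-connected in G \ (x,y). -/
variable {V : Type*}

/-- A walk in a digraph given by its edge set `E`, recorded as a list of edges. -/
inductive IsWalk (E : Set (V × V)) : V → V → List (V × V) → Prop
  | nil (u : V) : IsWalk E u u []
  | cons {u v w : V} {p : List (V × V)} (h : (u, v) ∈ E) (hp : IsWalk E v w p) :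
      IsWalk E u w ((u, v) :: p)

def Reaches (E : Set (V × V)) (u v : V) : Prop := ∃ p, IsWalk E u v p

def StronglyConnected (E : Set (V × V)) : Prop := ∀ u v : V, Reaches E u v

/-- Two edge-disjoint directed paths from `u` to `v`. -/
def TwoEDP (E : Set (V × V)) (u v : V) : Prop :=
  ∃ p q, IsWalk E u v p ∧ IsWalk E u v q ∧ p.Disjoint q

/-- `u` and `v` are 2-edge-connected. -/
def TwoEC (E : Set (V × V)) (u v : V) : Prop := TwoEDP E u v ∧ TwoEDP E v u

/-- A 2-edge-connected block: a maximal set of pairwise 2-edge-connected vertices. -/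
def Is2ECBlock (E : Set (V × V)) (B : Set V) : Prop :=
  (∀ u ∈ B, ∀ v ∈ B, TwoEC E u v) ∧
    ∀ C : Set V, B ⊆ C → (∀ u ∈ C, ∀ v ∈ C, TwoEC E u v) → C = B

def SameBlocks (E E' : Set (V × V)) : Prop :=
  ∀ B : Set V, Is2ECBlock E B ↔ Is2ECBlock E' B

/-- A strong bridge: an edge whose removal increases the number of strongly
connected components, i.e. destroys the mutual reachability of some pair. -/
def IsStrongBridge (E : Set (V × V)) (e : V × V) : Prop :=
  e ∈ E ∧ ∃ u v : V, (Reaches E u v ∧ Reaches E v u) ∧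
    ¬ (Reaches (E \ {e}) u v ∧ Reaches (E \ {e}) v u)

/-- A 2-edge-connected digraph: strongly connected and stays so after deleting any edge. -/
def Is2ECGraph (E : Set (V × V)) : Prop :=
  StronglyConnected E ∧ ∀ e ∈ E, StronglyConnected (E \ {e})

/-- Edges of `E` induced on the vertex set `C`. -/
def restrictE (E : Set (V × V)) (C : Set V) : Set (V × V) :=
  {e ∈ E | e.1 ∈ C ∧ e.2 ∈ C}

def SCOn (E' : Set (V × V)) (C : Set V) : Prop :=
  ∀ u ∈ C, ∀ v ∈ C, Reaches E' u v

/-- `E'` is a 2-edge-connected (spanning sub)graph on the vertex set `C`. -/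
def Is2ECOn (E' : Set (V × V)) (C : Set V) : Prop :=
  SCOn E' C ∧ ∀ e ∈ E', SCOn (E' \ {e}) C

/-- A 2-edge-connected component: a maximal vertex set inducing a 2-edge-connected subgraph. -/
def Is2ECComponent (E : Set (V × V)) (C : Set V) : Prop :=
  Is2ECOn (restrictE E C) C ∧
    ∀ D : Set V, C ⊆ D → Is2ECOn (restrictE E D) D → D = C

/-- A solution to 2EC-B: a strongly connected spanning subgraph with the same
2-edge-connected blocks. -/
def IsSolutionB (E E' : Set (V × V)) : Prop :=
  E' ⊆ E ∧ StronglyConnected E' ∧ SameBlocks E' E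

/-- The reverse digraph. -/
def revE (E : Set (V × V)) : Set (V × V) := {e | (e.2, e.1) ∈ E}

/-- A bridge of the flow graph with start vertex `s`: an edge contained in every
walk from `s` to its head. -/
def IsBridge (E : Set (V × V)) (s : V) (e : V × V) : Prop :=
  e ∈ E ∧ ∀ p, IsWalk E s e.2 p → e ∈ p

/-- `u` is a vertex of the walk `p` starting at `s`. -/
def OnWalk (s : V) (p : List (V × V)) (u : V) : Prop :=
  u = s ∨ ∃ e ∈ p, e.2 = u

/-- `u` dominates `w` in the flow graph with start `s`. -/
def Dom (E : Set (V × V)) (s u w : V) : Prop :=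
  ∀ p, IsWalk E s w p → OnWalk s p u

def PDom (E : Set (V × V)) (s u w : V) : Prop := Dom E s u w ∧ u ≠ w

/-- `u` is the immediate dominator of `w`. -/
def Idom (E : Set (V × V)) (s u w : V) : Prop :=
  PDom E s u w ∧ ∀ x, PDom E s x w → Dom E s x u

/-- Marked vertices: roots of the trees of the canonical decomposition of the
dominator tree, i.e. `s` and the heads of bridges of `G(s)`. -/
def Marked (E : Set (V × V)) (s r : V) : Prop :=
  r = s ∨ ∃ e, IsBridge E s e ∧ e.2 = r

/-- `w` belongs to the tree `T(r)` of the canonical decomposition: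
`r` is the nearest marked dominator of `w`. -/
def InTree (E : Set (V × V)) (s r w : V) : Prop :=
  Marked E s r ∧ Dom E s r w ∧ ∀ x, Marked E s x → Dom E s x w → Dom E s x r

/-- A spanning tree of the flow graph `G(s)` rooted at `s`. -/
def IsSpanningTree (E : Set (V × V)) (s : V) (T : Set (V × V)) : Prop :=
  T ⊆ E ∧ (∀ v, Reaches T s v) ∧ (∀ v, v ≠ s → ∃! e, e ∈ T ∧ e.2 = v) ∧
    ∀ e ∈ T, e.2 ≠ s

/-- Two independent spanning trees: for every `v`, the two tree paths from `s`
to `v` share only dominators of `v`. -/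
def IndependentTrees (E : Set (V × V)) (s : V) (T₁ T₂ : Set (V × V)) : Prop :=
  IsSpanningTree E s T₁ ∧ IsSpanningTree E s T₂ ∧
    ∀ v p q, IsWalk T₁ s v p → IsWalk T₂ s v q →
      ∀ u, OnWalk s p u → OnWalk s q u → Dom E s u v

/-- The contraction map defining the first-level auxiliary graph `G_r`:
vertices of `T(r)` stay put, descendants of a marked child `x` of a boundary
vertex of `T(r)` are contracted into `x`, and non-descendants of `r` are
contracted into `d(r)`. -/
def ContractsTo (E : Set (V × V)) (s r v x : V) : Prop :=
  (InTree E s r v ∧ x = v) ∨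
  (Dom E s r v ∧ ¬ InTree E s r v ∧ Marked E s x ∧ Dom E s x v ∧
    ∃ u, InTree E s r u ∧ Idom E s u x) ∨
  (¬ Dom E s r v ∧ Idom E s x r)

/-- The edge set of the first-level auxiliary graph `G_r`. -/
def AuxE (E : Set (V × V)) (s r : V) : Set (V × V) :=
  {e | ∃ a b, (a, b) ∈ E ∧ ContractsTo E s r a e.1 ∧ ContractsTo E s r b e.2}

def cutEdges (E : Set (V × V)) (U W : Set V) : Set (V × V) :=
  {e ∈ E | e.1 ∈ U ∧ e.2 ∈ W}

def IsCut (u w : V) (U W : Set V) : Prop := u ∈ U ∧ w ∈ W ∧ Disjoint U W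

def IsMinCut (E : Set (V × V)) (u w : V) (U W : Set V) : Prop :=
  IsCut u w U W ∧ ∀ U' W' : Set V, IsCut u w U' W' →
    (cutEdges E U W).ncard ≤ (cutEdges E U' W').ncard

/-- There exist `k` pairwise edge-disjoint walks from `u` to `w`. -/
def HasEDP (E : Set (V × V)) (u w : V) (k : ℕ) : Prop :=
  ∃ P : Fin k → List (V × V), (∀ i, IsWalk E u w (P i)) ∧
    ∀ i j, i ≠ j → (P i).Disjoint (P j)

/-- The (loop-free, simple) quotient of the inter-component edges `F` under the
component map `h`. -/
def quotE {V' : Type*} (h : V → V') (F : Set (V × V)) : Set (V' × V') :=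
  {q | ∃ e ∈ F, h e.1 = q.1 ∧ h e.2 = q.2 ∧ q.1 ≠ q.2}

/-- A solution to 2EC-C: a strongly connected spanning subgraph with the same
2-edge-connected components. -/
def IsSolutionC (E E' : Set (V × V)) : Prop :=
  E' ⊆ E ∧ StronglyConnected E' ∧
    ∀ C : Set V, Is2ECComponent E C ↔ Is2ECComponent E' C

/-- One step of the deletion process: delete an edge `(x,y)` such that two
edge-disjoint `x → y` paths remain. -/
def DelStep (E₁ E₂ : Set (V × V)) : Prop :=
  ∃ x y : V, (x, y) ∈ E₁ ∧ E₂ = E₁ \ {(x, y)} ∧ TwoEDP E₂ x y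



section AuxProof

open Classical

variable {E E₁ E₂ : Set (V × V)} {a b c u w : V} {p q : List (V × V)}

lemma IsWalk.mem_of (h : IsWalk E a b p) : ∀ e ∈ p, e ∈ E := by
  induction h with
  | nil => simp
  | cons he _ ih =>
      intro e hmem
      rcases List.mem_cons.1 hmem with rfl | h'
      · exact he
      · exact ih e h'

lemma IsWalk.of_forall_mem (h : IsWalk E₁ a b p) (hm : ∀ e ∈ p, e ∈ E₂) :
    IsWalk E₂ a b p := by
  induction h with
  | nil u => exact IsWalk.nil u
  | cons he hp ih =>
      exact IsWalk.cons (hm _ (List.mem_cons_self))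
        (ih fun e he' => hm e (List.mem_cons_of_mem _ he'))

lemma IsWalk.mono (hs : E₁ ⊆ E₂) (h : IsWalk E₁ a b p) : IsWalk E₂ a b p :=
  h.of_forall_mem fun e he => hs (h.mem_of e he)

lemma IsWalk.append_walk (h : IsWalk E a b p) (h' : IsWalk E b c q) :
    IsWalk E a c (p ++ q) := by
  induction h with
  | nil u => simpa using h'
  | cons he _ ih => exact IsWalk.cons he (ih h')

lemma Reaches.trans (h : Reaches E a b) (h' : Reaches E b c) : Reaches E a c := by
  obtain ⟨p, hp⟩ := h; obtain ⟨q, hq⟩ := h'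
  exact ⟨p ++ q, hp.append_walk hq⟩

lemma isWalk_split (h : IsWalk E a c (p ++ q)) :
    ∃ b, IsWalk E a b p ∧ IsWalk E b c q := by
  induction p generalizing a with
  | nil => exact ⟨a, IsWalk.nil a, by simpa using h⟩
  | cons e p ih =>
      cases h with
      | cons he hp =>
          obtain ⟨b, h1, h2⟩ := ih hp
          exact ⟨b, IsWalk.cons he h1, h2⟩

lemma IsWalk.dedup (h : IsWalk E a b p) :
    ∃ p', IsWalk E a b p' ∧ p'.Nodup ∧ p' ⊆ p := by
  induction h with
  | nil u => exact ⟨[], IsWalk.nil u, List.nodup_nil, by simp⟩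
  | @cons u v w p he hp ih =>
      obtain ⟨p', hw, hnd, hsub⟩ := ih
      by_cases hmem : (u, v) ∈ p'
      · obtain ⟨s, t, rfl⟩ := List.append_of_mem hmem
        obtain ⟨m, _, h2⟩ := isWalk_split hw
        cases h2 with
        | cons he' ht =>
            have hnd' := List.nodup_append.1 hnd
            refine ⟨(u, v) :: t, IsWalk.cons he ht, ?_, ?_⟩
            · exact List.nodup_cons.2 ⟨(List.nodup_cons.1 hnd'.2.1).1,
                (List.nodup_cons.1 hnd'.2.1).2⟩
            · intro e hme
              rcases List.mem_cons.1 hme with rfl | hme'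
              · exact List.mem_cons_self
              · exact List.mem_cons_of_mem _ (hsub (by simp [hme']))
      · refine ⟨(u, v) :: p', IsWalk.cons he hw, List.nodup_cons.2 ⟨hmem, hnd⟩, ?_⟩
        intro e hme
        rcases List.mem_cons.1 hme with rfl | hme'
        · exact List.mem_cons_self
        · exact List.mem_cons_of_mem _ (hsub hme')

/-- Out-degree minus in-degree of `v` in the edge list `l`. -/
noncomputable def exc (l : List (V × V)) (v : V) : ℤ :=
  ((l.countP fun e => decide (e.1 = v)) : ℤ) - ((l.countP fun e => decide (e.2 = v)) : ℤ)

lemma exc_nil (v : V) : exc ([] : List (V × V)) v = 0 := by simp [exc]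

lemma exc_append (l₁ l₂ : List (V × V)) (v : V) :
    exc (l₁ ++ l₂) v = exc l₁ v + exc l₂ v := by
  simp only [exc, List.countP_append]
  push_cast
  ring

lemma exc_perm {l₁ l₂ : List (V × V)} (h : l₁.Perm l₂) (v : V) :
    exc l₁ v = exc l₂ v := by
  simp [exc, h.countP_eq]

lemma exc_cons (e : V × V) (l : List (V × V)) (v : V) :
    exc (e :: l) v = exc l v + (if e.1 = v then 1 else 0) - (if e.2 = v then 1 else 0) := by
  simp only [exc, List.countP_cons]
  by_cases h1 : e.1 = v <;> by_cases h2 : e.2 = v <;>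
    simp [h1, h2] <;> push_cast <;> ring

lemma exc_walk (h : IsWalk E a b p) (v : V) :
    exc p v = (if a = v then 1 else 0) - (if b = v then 1 else 0) := by
  induction h with
  | nil u => simp [exc_nil]
  | @cons u x w p he hp ih => rw [exc_cons, ih]; ring

/-- Flow extraction: if `u` has positive excess in `l`, then a walk within `l`
from `u` to some deficit vertex can be split off. -/
lemma extract_aux : ∀ n : ℕ, ∀ l : List (V × V), l.length ≤ n → ∀ u : V, 1 ≤ exc l u →
    ∃ t pp r, l.Perm (pp ++ r) ∧ IsWalk {e | e ∈ l} u t pp ∧ exc l t ≤ -1 := by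
  intro n
  induction n with
  | zero =>
      intro l hl u hu
      have : l = [] := List.length_eq_zero_iff.1 (Nat.le_zero.1 hl)
      subst this
      simp [exc_nil] at hu
  | succ n ih =>
      intro l hl u hu
      have hpos : 0 < l.countP fun e => decide (e.1 = u) := by
        by_contra hc
        push_neg at hc
        have h0 : (l.countP fun e => decide (e.1 = u)) = 0 := Nat.le_zero.1 hc
        have : exc l u ≤ 0 := by
          simp only [exc, h0, Nat.cast_zero]
          omega
        omega
      obtain ⟨e, hel, he1⟩ := List.countP_pos_iff.1 hpos
      obtain ⟨a, v⟩ := e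
      have ha : a = u := by simpa using he1
      subst ha
      obtain ⟨s, t0, rfl⟩ := List.append_of_mem hel
      set l' := s ++ t0 with hl'
      have hperm : (s ++ (a, v) :: t0).Perm ((a, v) :: l') := List.perm_middle
      set l := s ++ (a, v) :: t0 with hldef
      have hexc : ∀ z, exc l z = exc l' z + (if a = z then 1 else 0) - (if v = z then 1 else 0) := by
        intro z
        rw [exc_perm hperm z, exc_cons]
      by_cases hstop : exc l v ≤ -1 ∧ v ≠ a
      · exact ⟨v, [(a, v)], l', hperm,
          IsWalk.cons hel (IsWalk.nil v), hstop.1⟩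
      · have hv1 : 1 ≤ exc l' v := by
          by_cases hvu : v = a
          · have := hexc v
            rw [hvu] at *
            simp at this
            omega
          · have hge : 0 ≤ exc l v := by
              by_contra hlt
              exact hstop ⟨by omega, hvu⟩
            have := hexc v
            simp [Ne.symm hvu, hvu] at this
            omega
        have hlen : l'.length ≤ n := by
          have h1 : l.length = l'.length + 1 := by
            simp [hldef, hl', List.length_append]
            omega
          omega
        obtain ⟨t, pp, r, hperm', hwalk, ht⟩ := ih l' hlen v hv1
        have hlu : 0 ≤ exc l' a := by
          have := hexc a
          by_cases hvu : v = a <;> simp [hvu] at this <;> omega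
        have htu : t ≠ a := by rintro rfl; omega
        have htv : t ≠ v := by rintro rfl; omega
        refine ⟨t, (a, v) :: pp, r, ?_, ?_, ?_⟩
        · exact hperm.trans (hperm'.cons _)
        · exact IsWalk.cons hel
            (hwalk.mono fun f hf => (by
              simp only [hl'] at hf
              rcases List.mem_append.1 hf with h | h
              · exact List.mem_append_left _ h
              · exact List.mem_append_right _ (List.mem_cons_of_mem _ h) : f ∈ l))
        · have := hexc t
          simp [Ne.symm htu, Ne.symm htv] at this
          omega

lemma extract (l : List (V × V)) (u : V) (h : 1 ≤ exc l u) :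
    ∃ t pp r, l.Perm (pp ++ r) ∧ IsWalk {e | e ∈ l} u t pp ∧ exc l t ≤ -1 :=
  extract_aux l.length l le_rfl u h

lemma exc_cross (R : Set V) (h : IsWalk E a b p) :
    ((p.countP fun e => decide (e.1 ∈ R ∧ e.2 ∉ R)) : ℤ) -
      ((p.countP fun e => decide (e.1 ∉ R ∧ e.2 ∈ R)) : ℤ) =
      (if a ∈ R then 1 else 0) - (if b ∈ R then 1 else 0) := by
  induction h with
  | nil u => simp
  | @cons u x w p he hp ih =>
      simp only [List.countP_cons]
      push_cast
      by_cases h1 : u ∈ R <;> by_cases h2 : x ∈ R <;> by_cases h3 : w ∈ R <;>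
        simp [h1, h2, h3] at ih ⊢ <;> omega

lemma exists_cross (R : Set V) (h : IsWalk E a b p) :
    a ∈ R → b ∉ R → ∃ e ∈ p, e.1 ∈ R ∧ e.2 ∉ R := by
  induction h with
  | nil u => intro ha hb; exact absurd ha hb
  | @cons u x w p he hp ih =>
      intro ha hb
      by_cases hx : x ∈ R
      · obtain ⟨e, he', h1, h2⟩ := ih hx hb
        exact ⟨e, List.mem_cons_of_mem _ he', h1, h2⟩
      · exact ⟨(u, x), List.mem_cons_self, ha, hx⟩

/-- Menger for `k = 2`: if no single edge deletion destroys reachability from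
`u` to `w`, then there are two edge-disjoint walks. -/
lemma menger2 (E₂ : Set (V × V)) (u w : V)
    (H : ∀ e : V × V, Reaches (E₂ \ {e}) u w) : TwoEDP E₂ u w := by
  by_cases huw : u = w
  · subst huw
    exact ⟨[], [], IsWalk.nil u, IsWalk.nil u, by simp [List.Disjoint]⟩
  obtain ⟨p₀, hp₀⟩ := H (u, u)
  have hp₀' : IsWalk E₂ u w p₀ := hp₀.mono Set.diff_subset
  obtain ⟨p₁, hw1, hnd1, hsub1⟩ := hp₀'.dedup
  set Er : Set (V × V) := (E₂ \ {e | e ∈ p₁}) ∪ {e | (e.2, e.1) ∈ p₁} with hEr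
  by_cases hR : Reaches Er u w
  · -- augmenting path exists
    obtain ⟨q₀, hq₀⟩ := hR
    obtain ⟨p₂, hw2, hnd2, hsub2⟩ := hq₀.dedup
    set A := p₂.filter (fun e => decide ((e.2, e.1) ∈ p₁)) with hA
    set f₂ := p₂.filter (fun e => !decide ((e.2, e.1) ∈ p₁)) with hf₂
    set B := p₁.filter (fun e => decide ((e.2, e.1) ∈ p₂)) with hB
    set f₁ := p₁.filter (fun e => !decide ((e.2, e.1) ∈ p₂)) with hf₁
    set l := f₁ ++ f₂ with hldef
    have hf₂E : ∀ e ∈ f₂, e ∈ E₂ ∧ e ∉ p₁ := by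
      intro e he
      have hm := List.mem_filter.1 he
      have hmem : e ∈ Er := hw2.mem_of e hm.1
      rcases hmem with h | h
      · exact ⟨h.1, h.2⟩
      · exact absurd h (by simpa using hm.2)
    have hlnd : l.Nodup := by
      refine List.nodup_append.2 ⟨hnd1.filter _, hnd2.filter _, ?_⟩
      intro e he1 e' he2 hee
      subst hee
      exact (hf₂E e he2).2 (List.mem_filter.1 he1).1
    have hmapnd : (B.map (fun e => (e.2, e.1))).Nodup :=
      (hnd1.filter _).map (fun e f hef => by
        simpa [Prod.ext_iff, and_comm] using hef)
    have hAB : A.Perm (B.map (fun e => (e.2, e.1))) := by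
      refine (List.perm_ext_iff_of_nodup (hnd2.filter _) hmapnd).2 ?_
      intro e
      simp only [hA, hB, List.mem_filter, List.mem_map, decide_eq_true_eq]
      constructor
      · rintro ⟨h1, h2⟩
        exact ⟨(e.2, e.1), ⟨h2, by simpa using h1⟩, by simp⟩
      · rintro ⟨f, ⟨hf1, hf2⟩, rfl⟩
        exact ⟨hf2, by simpa using hf1⟩
    have hexcAB : ∀ v, exc A v + exc B v = 0 := by
      intro v
      rw [exc_perm hAB v]
      simp only [exc, List.countP_map, Function.comp_def]
      ring
    have hsplit1 : ∀ v, exc A v + exc f₂ v = exc p₂ v := by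
      intro v
      rw [← exc_append]
      exact exc_perm (List.filter_append_perm _ _) v
    have hsplit2 : ∀ v, exc B v + exc f₁ v = exc p₁ v := by
      intro v
      rw [← exc_append]
      exact exc_perm (List.filter_append_perm _ _) v
    have hexcl : ∀ v, exc l v = exc p₁ v + exc p₂ v := by
      intro v
      have h1 := hsplit1 v
      have h2 := hsplit2 v
      have h3 := hexcAB v
      rw [hldef, exc_append]
      omega
    have hexcw : ∀ v, exc l v =
        ((if u = v then 1 else 0) - (if w = v then 1 else 0)) * 2 := by
      intro v
      rw [hexcl v, exc_walk hw1 v, exc_walk hw2 v]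
      ring
    have hlE : ∀ e ∈ l, e ∈ E₂ := by
      intro e he
      rcases List.mem_append.1 he with h | h
      · exact hw1.mem_of e (List.mem_filter.1 h).1
      · exact (hf₂E e h).1
    obtain ⟨t, pp, r, hperm, hwalk, ht⟩ := extract l u (by
      rw [hexcw u]
      simp [huw, Ne.symm huw])
    have ht' : t = w := by
      have h := hexcw t
      by_cases h2 : w = t
      · exact h2.symm
      · exfalso
        by_cases h1 : u = t <;> simp [h1, h2] at h <;> omega
    rw [ht'] at hwalk
    have hlnd' : (pp ++ r).Nodup := hperm.nodup hlnd
    obtain ⟨hppnd, hrnd, hdisj⟩ := List.nodup_append.1 hlnd'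
    have hexcr : ∀ v, exc r v = (if u = v then 1 else 0) - (if w = v then 1 else 0) := by
      intro v
      have h1 : exc l v = exc pp v + exc r v :=
        (exc_perm hperm v).trans (exc_append pp r v)
      have h2 := exc_walk hwalk v
      have h3 := hexcw v
      rw [h3, h2] at h1
      linarith [h1]
    obtain ⟨t2, qq, r₂, hperm2, hwalk2, ht2⟩ := extract r u (by
      rw [hexcr u]
      simp [Ne.symm huw])
    have ht2' : t2 = w := by
      have h := hexcr t2
      by_cases h2 : w = t2
      · exact h2.symm
      · exfalso
        by_cases h1 : u = t2 <;> simp [h1, h2] at h <;> omega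
    rw [ht2'] at hwalk2
    have hrl : ∀ e ∈ r, e ∈ l := fun e he =>
      hperm.mem_iff.2 (List.mem_append_right _ he)
    have hqr : ∀ e ∈ qq, e ∈ r := fun e he =>
      hperm2.mem_iff.2 (List.mem_append_left _ he)
    refine ⟨pp, qq, hwalk.of_forall_mem (fun e he => hlE e (hwalk.mem_of e he)),
      hwalk2.of_forall_mem (fun e he => hlE e (hrl e (hwalk2.mem_of e he))), ?_⟩
    intro e hep heq
    exact hdisj e hep e (hqr e heq) rfl
  · -- no augmenting path: a single bridge separates, contradiction
    exfalso
    set R : Set V := {v | Reaches Er u v} with hRdef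
    have huR : u ∈ R := ⟨[], IsWalk.nil u⟩
    have hwR : w ∉ R := hR
    have hstep : ∀ a b : V, a ∈ R → (a, b) ∈ Er → b ∈ R := by
      rintro a b ⟨pa, hpa⟩ he
      exact ⟨pa ++ [(a, b)], hpa.append_walk (IsWalk.cons he (IsWalk.nil b))⟩
    have hback : ∀ e ∈ p₁, e.2 ∈ R → e.1 ∈ R := by
      intro e he h2
      exact hstep _ _ h2 (Or.inr (by simpa using he))
    obtain ⟨e₀, he₀p, he₀1, he₀2⟩ := exists_cross R hw1 huR hwR
    have hcnt := exc_cross R hw1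
    have hbwd : (p₁.countP fun e => decide (e.1 ∉ R ∧ e.2 ∈ R)) = 0 := by
      rw [List.countP_eq_zero]
      intro e he
      simp only [decide_eq_true_eq, not_and]
      intro h1 h2
      exact h1 (hback e he h2)
    have hfwd : (p₁.countP fun e => decide (e.1 ∈ R ∧ e.2 ∉ R)) = 1 := by
      rw [hbwd] at hcnt
      rw [if_pos huR, if_neg hwR] at hcnt
      omega
    have huniq : ∀ e ∈ p₁, e.1 ∈ R → e.2 ∉ R → e = e₀ := by
      intro e he h1 h2
      by_contra hne
      set P : V × V → Bool := fun f => decide (f.1 ∈ R ∧ f.2 ∉ R) with hP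
      have heF : e ∈ p₁.filter P := List.mem_filter.2 ⟨he, by simp [hP, h1, h2]⟩
      have he₀F : e₀ ∈ p₁.filter P := List.mem_filter.2 ⟨he₀p, by simp [hP, he₀1, he₀2]⟩
      have hlen : (p₁.filter P).length = 1 := by
        rw [← List.countP_eq_length_filter]
        exact hfwd
      obtain ⟨f, hf⟩ := List.length_eq_one_iff.1 hlen
      rw [hf] at heF he₀F
      simp at heF he₀F
      exact hne (heF.trans he₀F.symm)
    obtain ⟨Wp, hWp⟩ := H e₀
    obtain ⟨e, heW, h1, h2⟩ := exists_cross R (hWp.mono Set.diff_subset) huR hwR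
    have heE : e ∈ E₂ \ {e₀} := hWp.mem_of e heW
    by_cases hep : e ∈ p₁
    · exact heE.2 (huniq e hep h1 h2)
    · have hmem : e ∈ Er := Or.inl ⟨heE.1, hep⟩
      exact h2 (hstep e.1 e.2 h1 (by simpa using hmem))

lemma patch {x y : V} {e : V × V}
    (hP : Reaches ((E \ {(x, y)}) \ {e}) x y) :
    ∀ n : ℕ, ∀ W : List (V × V), W.length ≤ n → ∀ a b : V,
      IsWalk E a b W → e ∉ W → Reaches ((E \ {(x, y)}) \ {e}) a b := by
  intro n
  induction n with
  | zero =>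
      intro W hlen a b hW _
      have : W = [] := List.length_eq_zero_iff.1 (Nat.le_zero.1 hlen)
      subst this
      cases hW
      exact ⟨[], IsWalk.nil a⟩
  | succ n ih =>
      intro W hlen a b hW heW
      by_cases hxyW : (x, y) ∈ W
      · obtain ⟨s, t, rfl⟩ := List.append_of_mem hxyW
        obtain ⟨m, hs, ht'⟩ := isWalk_split hW
        cases ht' with
        | cons hxyE ht =>
            have hlen' : s.length + (t.length + 1) ≤ n + 1 := by
              simpa using hlen
            have hls : s.length ≤ n := by omega
            have hlt : t.length ≤ n := by omega
            have h1 : Reaches ((E \ {(x, y)}) \ {e}) a x :=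
              ih s hls a x hs (fun hc => heW (List.mem_append_left _ hc))
            have h2 : Reaches ((E \ {(x, y)}) \ {e}) y b :=
              ih t hlt y b ht (fun hc => heW (List.mem_append_right _
                (List.mem_cons_of_mem _ hc)))
            exact h1.trans (hP.trans h2)
      · refine ⟨W, hW.of_forall_mem fun f hf => ?_⟩
        refine ⟨⟨hW.mem_of f hf, ?_⟩, ?_⟩
        · intro hq
          have hfe : f = (x, y) := hq
          exact hxyW (hfe ▸ hf)
        · intro hq
          have hfe : f = e := hq
          exact heW (hfe ▸ hf)

lemma transfer {E : Set (V × V)} {x y : V} (h2 : TwoEDP (E \ {(x, y)}) x y)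
    {a b : V} (hab : TwoEDP E a b) : TwoEDP (E \ {(x, y)}) a b := by
  apply menger2
  intro e
  obtain ⟨p, q, hp, hq, hdisj⟩ := hab
  obtain ⟨P, Q, hPw, hQw, hdisjPQ⟩ := h2
  have hPQ : Reaches ((E \ {(x, y)}) \ {e}) x y := by
    by_cases heP : e ∈ P
    · refine ⟨Q, hQw.of_forall_mem fun f hf => ⟨hQw.mem_of f hf, ?_⟩⟩
      intro hq'
      have : f = e := hq'
      exact hdisjPQ heP (this ▸ hf)
    · refine ⟨P, hPw.of_forall_mem fun f hf => ⟨hPw.mem_of f hf, ?_⟩⟩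
      intro hq'
      have : f = e := hq'
      exact heP (this ▸ hf)
  by_cases hep : e ∈ p
  · have heq : e ∉ q := fun h => hdisj hep h
    exact patch hPQ q.length q le_rfl a b (hq.mono Set.Subset.rfl) heq
  · exact patch hPQ p.length p le_rfl a b hp hep

end AuxProof

theorem stmt0 (E : Set (V × V)) (x y : V)
    (hSC : StronglyConnected E) (hxy : (x, y) ∈ E)
    (h2 : TwoEDP (E \ {(x, y)}) x y) :
    ∀ u w : V, TwoEC E u w → TwoEC (E \ {(x, y)}) u w := by
  rintro u w ⟨h1, h1'⟩
  exact ⟨transfer h2 h1, transfer h2 h1'⟩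
end

section
/- Let G be a strongly connected directed graph and (x,y) an edge such that x and y lie in the same 2-edge-connected block of G. Then G \ (x,y) has the same 2-edge-connected blocks as G if and only if G \ (x,y) contains two edge-disjoint directed paths from x to y. -/
variable {V : Type*}

section AuxLemmas

theorem IsWalk.mono' {T T' : Set (V × V)} (hTT : T ⊆ T') :
    ∀ {a b : V} {p : List (V × V)}, IsWalk T a b p → IsWalk T' a b p := by
  intro a b p h
  induction h with
  | nil u => exact .nil u
  | cons h _ ih => exact .cons (hTT h) ih

theorem IsWalk.append' {T : Set (V × V)} {a b c : V} {p q : List (V × V)}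
    (h : IsWalk T a b p) (h' : IsWalk T b c q) : IsWalk T a c (p ++ q) := by
  induction h with
  | nil u => simpa using h'
  | cons h _ ih => exact .cons h (ih h')

theorem IsWalk.mem_edges {T : Set (V × V)} :
    ∀ {a b : V} {p : List (V × V)}, IsWalk T a b p → ∀ e ∈ p, e ∈ T := by
  intro a b p h
  induction h with
  | nil u => simp
  | cons h _ ih =>
    intro e he
    rcases List.mem_cons.mp he with rfl | he
    · exact h
    · exact ih e he

theorem reaches_step {T : Set (V × V)} {a : V} {e : V × V}
    (h : Reaches T a e.1) (he : e ∈ T) : Reaches T a e.2 := by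
  obtain ⟨p, hp⟩ := h
  exact ⟨p ++ [(e.1, e.2)], hp.append' (.cons (by simpa using he) (.nil e.2))⟩

theorem walk_suffix {T : Set (V × V)} :
    ∀ {s t : V} {q : List (V × V)}, IsWalk T s t q → q.Nodup → ∀ {a c : V}, (a, c) ∈ q →
      ∃ q₂, IsWalk T c t q₂ ∧ q₂.Nodup ∧ (∀ x ∈ q₂, x ∈ q) ∧ (a, c) ∉ q₂ := by
  intro s t q h
  induction h with
  | nil u => simp
  | @cons u v w rest hE hp ih =>
    intro hnd a c hm
    obtain ⟨hne, hnd'⟩ := List.nodup_cons.mp hnd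
    rcases List.mem_cons.mp hm with heq | hm'
    · cases heq
      exact ⟨rest, hp, hnd', fun x hx => List.mem_cons_of_mem _ hx, hne⟩
    · obtain ⟨q₂, hw, hnd₂, hsub, hnm⟩ := ih hnd' hm'
      exact ⟨q₂, hw, hnd₂, fun x hx => List.mem_cons_of_mem _ (hsub x hx), hnm⟩

theorem walk_nodup {T : Set (V × V)} :
    ∀ {a b : V} {p : List (V × V)}, IsWalk T a b p →
      ∃ q, IsWalk T a b q ∧ q.Nodup ∧ ∀ x ∈ q, x ∈ p := by
  intro a b p h
  induction h with
  | nil u => exact ⟨[], .nil u, List.nodup_nil, by simp⟩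
  | @cons u v w rest hE hp ih =>
    obtain ⟨q, hq, hnd, hsub⟩ := ih
    by_cases hm : (u, v) ∈ q
    · obtain ⟨q₂, hw₂, hnd₂, hsub₂, hnm⟩ := walk_suffix hq hnd hm
      exact ⟨(u, v) :: q₂, .cons hE hw₂, List.nodup_cons.mpr ⟨hnm, hnd₂⟩,
        fun x hx => by
          rcases List.mem_cons.mp hx with rfl | hx
          · exact List.mem_cons_self
          · exact List.mem_cons_of_mem _ (hsub x (hsub₂ x hx))⟩
    · exact ⟨(u, v) :: q, .cons hE hq, List.nodup_cons.mpr ⟨hm, hnd⟩,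
        fun x hx => by
          rcases List.mem_cons.mp hx with rfl | hx
          · exact List.mem_cons_self
          · exact List.mem_cons_of_mem _ (hsub x hx)⟩

theorem walk_cross {T : Set (V × V)} {U : Set V} :
    ∀ {a b : V} {p : List (V × V)}, IsWalk T a b p → b ∉ U → a ∈ U →
      ∃ e ∈ p, e.1 ∈ U ∧ e.2 ∉ U := by
  intro a b p h
  induction h with
  | nil u => intro hb ha; exact absurd ha hb
  | @cons u v w rest hE hp ih =>
    intro hb ha
    by_cases hv : v ∈ U
    · obtain ⟨e, he, hc⟩ := ih hb hv
      exact ⟨e, List.mem_cons_of_mem _ he, hc⟩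
    · exact ⟨(u, v), List.mem_cons_self, ha, hv⟩

open Classical in
/-- number of elements of the list satisfying `P`, as an integer. -/
noncomputable def ccount (P : V × V → Prop) : List (V × V) → ℤ
  | [] => 0
  | e :: l => (if P e then 1 else 0) + ccount P l

open Classical in
theorem ccount_cons (P : V × V → Prop) (e : V × V) (l : List (V × V)) :
    ccount P (e :: l) = (if P e then 1 else 0) + ccount P l := rfl

theorem ccount_nonneg {P : V × V → Prop} : ∀ (l : List (V × V)), 0 ≤ ccount P l := by
  intro l
  induction l with
  | nil => simp [ccount]
  | cons e t ih =>
    rw [ccount_cons]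
    by_cases h : P e
    · rw [if_pos h]; linarith
    · rw [if_neg h]; linarith

theorem ccount_eq_zero {P : V × V → Prop} {l : List (V × V)}
    (h : ∀ e ∈ l, ¬ P e) : ccount P l = 0 := by
  induction l with
  | nil => simp [ccount]
  | cons e t ih =>
    rw [ccount_cons, if_neg (h e (List.mem_cons_self)),
      ih (fun x hx => h x (List.mem_cons_of_mem _ hx))]
    ring

theorem one_le_ccount {P : V × V → Prop} {l : List (V × V)} {e : V × V}
    (he : e ∈ l) (hP : P e) : 1 ≤ ccount P l := by
  induction l with
  | nil => simp at he
  | cons f t ih =>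
    rw [ccount_cons]
    rcases List.mem_cons.mp he with rfl | he'
    · rw [if_pos hP]; linarith [ccount_nonneg (P := P) t]
    · by_cases h : P f
      · rw [if_pos h]; linarith [ccount_nonneg (P := P) t, ih he']
      · rw [if_neg h]; linarith [ih he']

theorem two_le_ccount {P : V × V → Prop} {l : List (V × V)} {e₁ e₂ : V × V}
    (h1 : e₁ ∈ l) (h2 : e₂ ∈ l) (hne : e₁ ≠ e₂) (hP1 : P e₁) (hP2 : P e₂) :
    2 ≤ ccount P l := by
  induction l with
  | nil => simp at h1
  | cons f t ih =>
    rw [ccount_cons]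
    rcases List.mem_cons.mp h1 with rfl | h1'
    · have h2t : e₂ ∈ t := by
        rcases List.mem_cons.mp h2 with rfl | h2'
        · exact absurd rfl hne
        · exact h2'
      rw [if_pos hP1]; linarith [one_le_ccount h2t hP2]
    · rcases List.mem_cons.mp h2 with rfl | h2'
      · rw [if_pos hP2]; linarith [one_le_ccount h1' hP1]
      · by_cases h : P f
        · rw [if_pos h]; linarith [ih h1' h2']
        · rw [if_neg h]; linarith [ih h1' h2']

open Classical in
theorem ccount_cross {T : Set (V × V)} {U : Set V} :
    ∀ {a b : V} {p : List (V × V)}, IsWalk T a b p →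
      ccount (fun e => e.1 ∈ U ∧ e.2 ∉ U) p - ccount (fun e => e.1 ∉ U ∧ e.2 ∈ U) p
        = (if a ∈ U then 1 else 0) - (if b ∈ U then 1 else 0) := by
  intro a b p h
  induction h with
  | nil u => simp [ccount]
  | @cons u v w rest hE hp ih =>
    rw [ccount_cons, ccount_cons]
    by_cases hu : u ∈ U <;> by_cases hv : v ∈ U
    · rw [if_neg (fun h => h.2 hv), if_neg (fun h => h.1 hu), if_pos hu]
      rw [if_pos hv] at ih
      linarith
    · rw [if_pos ⟨hu, hv⟩, if_neg (fun h => h.1 hu), if_pos hu]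
      rw [if_neg hv] at ih
      linarith
    · rw [if_neg (fun h => hu h.1), if_pos ⟨hu, hv⟩, if_neg hu]
      rw [if_pos hv] at ih
      linarith
    · rw [if_neg (fun h => hu h.1), if_neg (fun h => hv h.2), if_neg hu]
      rw [if_neg hv] at ih
      linarith

end AuxLemmas

section Degrees
variable [DecidableEq V]

/-- out-degree of `w` in the finite edge set `F`, as an integer. -/
def degOut (F : Finset (V × V)) (w : V) : ℤ := ((F.filter (fun e => e.1 = w)).card : ℤ)

/-- in-degree of `w` in the finite edge set `F`, as an integer. -/
def degIn (F : Finset (V × V)) (w : V) : ℤ := ((F.filter (fun e => e.2 = w)).card : ℤ)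

theorem degOut_nonneg (F : Finset (V × V)) (w : V) : 0 ≤ degOut F w := Int.natCast_nonneg _

theorem degIn_nonneg (F : Finset (V × V)) (w : V) : 0 ≤ degIn F w := Int.natCast_nonneg _

theorem degOut_insert {F : Finset (V × V)} {e : V × V} (h : e ∉ F) (w : V) :
    degOut (insert e F) w = degOut F w + if e.1 = w then 1 else 0 := by
  unfold degOut
  rw [Finset.filter_insert]
  split_ifs with h1
  · rw [Finset.card_insert_of_notMem (fun hc => h (Finset.mem_filter.mp hc).1)]
    push_cast; ring
  · ring

theorem degIn_insert {F : Finset (V × V)} {e : V × V} (h : e ∉ F) (w : V) :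
    degIn (insert e F) w = degIn F w + if e.2 = w then 1 else 0 := by
  unfold degIn
  rw [Finset.filter_insert]
  split_ifs with h1
  · rw [Finset.card_insert_of_notMem (fun hc => h (Finset.mem_filter.mp hc).1)]
    push_cast; ring
  · ring

theorem degOut_union {A B : Finset (V × V)} (h : Disjoint A B) (w : V) :
    degOut (A ∪ B) w = degOut A w + degOut B w := by
  unfold degOut
  rw [Finset.filter_union, Finset.card_union_of_disjoint
    (Finset.disjoint_filter_filter h)]
  push_cast; ring

theorem degIn_union {A B : Finset (V × V)} (h : Disjoint A B) (w : V) :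
    degIn (A ∪ B) w = degIn A w + degIn B w := by
  unfold degIn
  rw [Finset.filter_union, Finset.card_union_of_disjoint
    (Finset.disjoint_filter_filter h)]
  push_cast; ring

theorem degOut_sdiff {P F : Finset (V × V)} (h : P ⊆ F) (w : V) :
    degOut (F \ P) w = degOut F w - degOut P w := by
  have hd : Disjoint (F \ P) P := Finset.sdiff_disjoint
  have := degOut_union hd w
  rw [Finset.sdiff_union_of_subset h] at this
  linarith

theorem degIn_sdiff {P F : Finset (V × V)} (h : P ⊆ F) (w : V) :
    degIn (F \ P) w = degIn F w - degIn P w := by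
  have hd : Disjoint (F \ P) P := Finset.sdiff_disjoint
  have := degIn_union hd w
  rw [Finset.sdiff_union_of_subset h] at this
  linarith

theorem degOut_singleton (e : V × V) (w : V) :
    degOut {e} w = if e.1 = w then 1 else 0 := by
  unfold degOut
  rw [Finset.filter_singleton]
  split_ifs <;> simp

theorem degIn_singleton (e : V × V) (w : V) :
    degIn {e} w = if e.2 = w then 1 else 0 := by
  unfold degIn
  rw [Finset.filter_singleton]
  split_ifs <;> simp

theorem filter_image_swap {A : Finset (V × V)} {w : V} :
    (A.image Prod.swap).filter (fun e => e.1 = w) =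
      (A.filter (fun e => e.2 = w)).image Prod.swap := by
  ext e
  simp only [Finset.mem_filter, Finset.mem_image]
  constructor
  · rintro ⟨⟨a, ha, rfl⟩, hw⟩
    exact ⟨a, ⟨ha, by simpa using hw⟩, rfl⟩
  · rintro ⟨a, ⟨ha, hw⟩, rfl⟩
    exact ⟨⟨a, ha, rfl⟩, by simpa⟩

theorem filter_image_swap' {A : Finset (V × V)} {w : V} :
    (A.image Prod.swap).filter (fun e => e.2 = w) =
      (A.filter (fun e => e.1 = w)).image Prod.swap := by
  ext e
  simp only [Finset.mem_filter, Finset.mem_image]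
  constructor
  · rintro ⟨⟨a, ha, rfl⟩, hw⟩
    exact ⟨a, ⟨ha, by simpa using hw⟩, rfl⟩
  · rintro ⟨a, ⟨ha, hw⟩, rfl⟩
    exact ⟨⟨a, ha, rfl⟩, by simpa⟩

theorem degOut_image_swap (A : Finset (V × V)) (w : V) :
    degOut (A.image Prod.swap) w = degIn A w := by
  unfold degOut degIn
  rw [filter_image_swap, Finset.card_image_of_injective _ Prod.swap_injective]

theorem degIn_image_swap (A : Finset (V × V)) (w : V) :
    degIn (A.image Prod.swap) w = degOut A w := by
  unfold degOut degIn
  rw [filter_image_swap', Finset.card_image_of_injective _ Prod.swap_injective]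

theorem walk_deg {T : Set (V × V)} :
    ∀ {a b : V} {p : List (V × V)}, IsWalk T a b p → p.Nodup → ∀ w : V,
      degOut p.toFinset w - degIn p.toFinset w
        = (if w = a then 1 else 0) - (if w = b then 1 else 0) := by
  intro a b p h
  induction h with
  | nil u => intro _ w; simp [degOut, degIn]
  | @cons u c b rest hE hp ih =>
    intro hnd w
    obtain ⟨hne, hnd'⟩ := List.nodup_cons.mp hnd
    have hni : (u, c) ∉ rest.toFinset := by simpa using hne
    have hih := ih hnd' w
    rw [List.toFinset_cons, degOut_insert hni w, degIn_insert hni w]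
    by_cases h1 : u = w <;> by_cases h2 : c = w
    · rw [if_pos h1, if_pos h2, if_pos h1.symm]
      rw [if_pos h2.symm] at hih
      linarith
    · rw [if_pos h1, if_neg h2, if_pos h1.symm]
      rw [if_neg (fun h => h2 h.symm)] at hih
      linarith
    · rw [if_neg h1, if_pos h2, if_neg (fun h => h1 h.symm)]
      rw [if_pos h2.symm] at hih
      linarith
    · rw [if_neg h1, if_neg h2, if_neg (fun h => h1 h.symm)]
      rw [if_neg (fun h => h2 h.symm)] at hih
      linarith

end Degrees

section Flows
variable [DecidableEq V]

theorem flow_extract {v : V} :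
    ∀ (n : ℕ) (F : Finset (V × V)), F.card = n → ∀ (a : V),
      (∀ w, w ≠ v → degIn F w ≤ degOut F w) → (a ≠ v → degIn F a < degOut F a) →
      ∃ p, IsWalk (↑F : Set (V × V)) a v p ∧ p.Nodup := by
  intro n
  induction n using Nat.strong_induction_on with
  | _ n ih =>
    intro F hcard a hbal hsrc
    by_cases hav : a = v
    · subst hav; exact ⟨[], .nil a, List.nodup_nil⟩
    have h1 : degIn F a < degOut F a := hsrc hav
    have h2 : 0 < degOut F a := lt_of_le_of_lt (degIn_nonneg F a) h1
    have hne : (F.filter (fun e => e.1 = a)).Nonempty := by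
      rw [← Finset.card_pos]
      have h2' : (0:ℤ) < ((F.filter (fun e => e.1 = a)).card : ℤ) := h2
      exact_mod_cast h2'
    obtain ⟨e, he⟩ := hne
    obtain ⟨heF, hea⟩ := Finset.mem_filter.mp he
    have hesub : {e} ⊆ F := Finset.singleton_subset_iff.mpr heF
    have hOut : ∀ w, degOut (F.erase e) w = degOut F w - if a = w then 1 else 0 := by
      intro w
      rw [Finset.erase_eq, degOut_sdiff hesub, degOut_singleton, hea]
    have hIn : ∀ w, degIn (F.erase e) w = degIn F w - if e.2 = w then 1 else 0 := by
      intro w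
      rw [Finset.erase_eq, degIn_sdiff hesub, degIn_singleton]
    have hcard2 : (F.erase e).card < n := by
      rw [← hcard]; exact Finset.card_erase_lt_of_mem heF
    have hbal2 : ∀ w, w ≠ v → degIn (F.erase e) w ≤ degOut (F.erase e) w := by
      intro w hw
      have hb := hbal w hw
      rw [hOut w, hIn w]
      by_cases hwa : a = w <;> by_cases hwb : e.2 = w
      · rw [if_pos hwa, if_pos hwb]
        have h1' : degIn F w < degOut F w := hwa ▸ h1
        linarith
      · rw [if_pos hwa, if_neg hwb]
        have h1' : degIn F w < degOut F w := hwa ▸ h1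
        linarith
      · rw [if_neg hwa, if_pos hwb]; linarith
      · rw [if_neg hwa, if_neg hwb]; linarith
    have hsrc2 : e.2 ≠ v → degIn (F.erase e) e.2 < degOut (F.erase e) e.2 := by
      intro hv2
      rw [hOut e.2, hIn e.2, if_pos rfl]
      by_cases hwa : a = e.2
      · rw [if_pos hwa]
        have h1' : degIn F e.2 < degOut F e.2 := hwa ▸ h1
        linarith
      · rw [if_neg hwa]
        have := hbal e.2 hv2
        linarith
    obtain ⟨p, hp, hnd⟩ := ih (F.erase e).card hcard2 (F.erase e) rfl e.2 hbal2 hsrc2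
    have hee : (a, e.2) = e := by rw [← hea]
    refine ⟨(a, e.2) :: p, ?_, ?_⟩
    · exact IsWalk.cons (Finset.mem_coe.mpr (hee ▸ heF))
        (hp.mono' (Finset.coe_subset.mpr (Finset.erase_subset _ _)))
    · refine List.nodup_cons.mpr ⟨?_, hnd⟩
      intro hc
      have : (a, e.2) ∈ F.erase e := Finset.mem_coe.mp (hp.mem_edges _ hc)
      rw [hee] at this
      exact Finset.notMem_erase e F this

theorem flow_extract' {v : V} (F : Finset (V × V)) (a : V)
    (hbal : ∀ w, w ≠ v → degIn F w ≤ degOut F w)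
    (hsrc : a ≠ v → degIn F a < degOut F a) :
    ∃ p, IsWalk (↑F : Set (V × V)) a v p ∧ p.Nodup :=
  flow_extract F.card F rfl a hbal hsrc

theorem two_flow_decomp {u v : V} (huv : u ≠ v) (F : Finset (V × V))
    (hbal : ∀ w, degOut F w - degIn F w
      = 2 * ((if w = u then 1 else 0) - (if w = v then 1 else 0))) :
    ∃ p q, IsWalk (↑F : Set (V × V)) u v p ∧ IsWalk (↑F : Set (V × V)) u v q ∧
      p.Disjoint q := by
  have hb1 : ∀ w, w ≠ v → degIn F w ≤ degOut F w := by
    intro w hw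
    have h := hbal w
    by_cases h1 : w = u
    · rw [if_pos h1, if_neg hw] at h; linarith
    · rw [if_neg h1, if_neg hw] at h; linarith
  have hs1 : u ≠ v → degIn F u < degOut F u := by
    intro _
    have h := hbal u
    rw [if_pos rfl, if_neg huv] at h; linarith
  obtain ⟨p, hp, hnd⟩ := flow_extract' F u hb1 hs1
  have hPF : p.toFinset ⊆ F := fun e he =>
    Finset.mem_coe.mp (hp.mem_edges e (List.mem_toFinset.mp he))
  have hpd := walk_deg hp hnd
  have hbal' : ∀ w, degOut (F \ p.toFinset) w - degIn (F \ p.toFinset) w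
      = (if w = u then 1 else 0) - (if w = v then 1 else 0) := by
    intro w
    rw [degOut_sdiff hPF, degIn_sdiff hPF]
    have h2 := hbal w; have h3 := hpd w
    linarith
  have hb2 : ∀ w, w ≠ v → degIn (F \ p.toFinset) w ≤ degOut (F \ p.toFinset) w := by
    intro w hw
    have h := hbal' w
    by_cases h1 : w = u
    · rw [if_pos h1, if_neg hw] at h; linarith
    · rw [if_neg h1, if_neg hw] at h; linarith
  have hs2 : u ≠ v → degIn (F \ p.toFinset) u < degOut (F \ p.toFinset) u := by
    intro _
    have h := hbal' u
    rw [if_pos rfl, if_neg huv] at h; linarith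
  obtain ⟨q, hq, _⟩ := flow_extract' (F \ p.toFinset) u hb2 hs2
  refine ⟨p, q, hp, hq.mono' (Finset.coe_subset.mpr Finset.sdiff_subset), ?_⟩
  intro e hep heq
  have h1 : e ∈ F \ p.toFinset := Finset.mem_coe.mp (hq.mem_edges e heq)
  exact (Finset.mem_sdiff.mp h1).2 (List.mem_toFinset.mpr hep)

theorem two_menger {u v : V} (huv : u ≠ v) (S : Finset (V × V))
    (hcut : ∀ U : Set V, u ∈ U → v ∉ U → ∃ e₁ e₂ : V × V, e₁ ≠ e₂ ∧ e₁ ∈ S ∧ e₂ ∈ S ∧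
      (e₁.1 ∈ U ∧ e₁.2 ∉ U) ∧ (e₂.1 ∈ U ∧ e₂.2 ∉ U)) :
    ∃ p q, IsWalk (↑S : Set (V × V)) u v p ∧ IsWalk (↑S : Set (V × V)) u v q ∧
      p.Disjoint q := by
  have hreach : Reaches (↑S : Set (V × V)) u v := by
    by_contra hnr
    set U : Set V := {w | Reaches (↑S : Set (V × V)) u w} with hU
    have hu : u ∈ U := ⟨[], .nil u⟩
    have hv : v ∉ U := hnr
    obtain ⟨e₁, e₂, _, he₁S, _, ⟨h11, h12⟩, _⟩ := hcut U hu hv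
    exact h12 (reaches_step h11 (Finset.mem_coe.mpr he₁S))
  obtain ⟨p0, hp0⟩ := hreach
  obtain ⟨p₁, hp₁, hnd₁, _⟩ := walk_nodup hp0
  have hP1S : p₁.toFinset ⊆ S := fun e he =>
    Finset.mem_coe.mp (hp₁.mem_edges e (List.mem_toFinset.mp he))
  set R : Set (V × V) :=
    ((↑S : Set (V × V)) \ ↑p₁.toFinset) ∪ ↑(p₁.toFinset.image Prod.swap) with hRdef
  have hreach2 : Reaches R u v := by
    by_contra hnr
    set U : Set V := {w | Reaches R u w} with hU
    have hu : u ∈ U := ⟨[], .nil u⟩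
    have hv : v ∉ U := hnr
    have hfwd : ∀ e : V × V, e ∈ S → e ∉ p₁.toFinset → e.1 ∈ U → e.2 ∈ U := by
      intro e heS heP h1
      exact reaches_step h1
        (Set.mem_union_left _ ⟨Finset.mem_coe.mpr heS, fun hc => heP (Finset.mem_coe.mp hc)⟩)
    have hbwd : ∀ e ∈ p₁, ¬ (e.1 ∉ U ∧ e.2 ∈ U) := by
      rintro e hep ⟨h1, h2⟩
      apply h1
      have hswap : Prod.swap e ∈ R := Set.mem_union_right _
        (Finset.mem_coe.mpr (Finset.mem_image_of_mem _ (List.mem_toFinset.mpr hep)))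
      exact reaches_step (e := Prod.swap e) h2 hswap
    have hcc := ccount_cross (U := U) hp₁
    rw [if_pos hu, if_neg hv] at hcc
    have hb0 : ccount (fun e => e.1 ∉ U ∧ e.2 ∈ U) p₁ = 0 := ccount_eq_zero hbwd
    obtain ⟨e₁, e₂, hne, h1S, h2S, hc1, hc2⟩ := hcut U hu hv
    have he₁p : e₁ ∈ p₁ := by
      by_contra h
      exact hc1.2 (hfwd e₁ h1S (fun hc => h (List.mem_toFinset.mp hc)) hc1.1)
    have he₂p : e₂ ∈ p₁ := by
      by_contra h
      exact hc2.2 (hfwd e₂ h2S (fun hc => h (List.mem_toFinset.mp hc)) hc2.1)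
    have h2le := two_le_ccount (P := fun e : V × V => e.1 ∈ U ∧ e.2 ∉ U) he₁p he₂p hne hc1 hc2
    linarith
  obtain ⟨q0, hq0⟩ := hreach2
  obtain ⟨p₂, hp₂, hnd₂, _⟩ := walk_nodup hq0
  set B : Finset (V × V) := p₂.toFinset ∩ p₁.toFinset.image Prod.swap with hBdef
  have hBP2 : B ⊆ p₂.toFinset := Finset.inter_subset_left
  have hBswP1 : B.image Prod.swap ⊆ p₁.toFinset := by
    intro e he
    obtain ⟨b, hb, rfl⟩ := Finset.mem_image.mp he
    obtain ⟨a, ha, rfl⟩ := Finset.mem_image.mp (Finset.mem_of_mem_inter_right hb)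
    simpa using ha
  have hP2R : ∀ e ∈ p₂.toFinset, e ∈ R := fun e he => hp₂.mem_edges e (List.mem_toFinset.mp he)
  have hdisj : Disjoint (p₁.toFinset \ B.image Prod.swap) (p₂.toFinset \ B) := by
    rw [Finset.disjoint_left]
    intro e he1 he2
    obtain ⟨he2P, he2B⟩ := Finset.mem_sdiff.mp he2
    obtain ⟨he1P, _⟩ := Finset.mem_sdiff.mp he1
    rcases (Set.mem_union _ _ _).mp (hP2R e he2P) with h | h
    · exact h.2 (Finset.mem_coe.mpr he1P)
    · exact he2B (Finset.mem_inter.mpr ⟨he2P, Finset.mem_coe.mp h⟩)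
  set F : Finset (V × V) := (p₁.toFinset \ B.image Prod.swap) ∪ (p₂.toFinset \ B) with hFdef
  have hFS : (↑F : Set (V × V)) ⊆ ↑S := by
    intro e he
    rcases Finset.mem_union.mp (Finset.mem_coe.mp he) with h | h
    · exact Finset.mem_coe.mpr (hP1S (Finset.mem_sdiff.mp h).1)
    · obtain ⟨heP, heB⟩ := Finset.mem_sdiff.mp h
      rcases (Set.mem_union _ _ _).mp (hP2R e heP) with h' | h'
      · exact h'.1
      · exact absurd (Finset.mem_inter.mpr ⟨heP, Finset.mem_coe.mp h'⟩) heB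
  have hpd1 := walk_deg hp₁ hnd₁
  have hpd2 := walk_deg hp₂ hnd₂
  have hbal : ∀ w, degOut F w - degIn F w
      = 2 * ((if w = u then 1 else 0) - (if w = v then 1 else 0)) := by
    intro w
    rw [hFdef, degOut_union hdisj, degIn_union hdisj,
      degOut_sdiff hBswP1, degIn_sdiff hBswP1, degOut_sdiff hBP2, degIn_sdiff hBP2,
      degOut_image_swap, degIn_image_swap]
    have h1 := hpd1 w; have h2 := hpd2 w
    linarith
  obtain ⟨p, q, hp, hq, hd⟩ := two_flow_decomp huv F hbal
  exact ⟨p, q, hp.mono' hFS, hq.mono' hFS, hd⟩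

end Flows

theorem TwoEDP.mono {E E' : Set (V × V)} (h : E ⊆ E') {a b : V} :
    TwoEDP E a b → TwoEDP E' a b :=
  fun ⟨p, q, hp, hq, hd⟩ => ⟨p, q, hp.mono' h, hq.mono' h, hd⟩

theorem reroute [DecidableEq V] {E : Set (V × V)} {x y : V}
    (h2 : TwoEDP (E \ {(x, y)}) x y) {u v : V} (h : TwoEDP E u v) :
    TwoEDP (E \ {(x, y)}) u v := by
  by_cases huv : u = v
  · subst huv
    exact ⟨[], [], .nil u, .nil u, fun a ha => absurd ha List.not_mem_nil⟩
  obtain ⟨p₀, q₀, hp₀, hq₀, hd₀⟩ := h2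
  obtain ⟨p, q, hp, hq, hd⟩ := h
  set S : Finset (V × V) := ((p ++ q ++ p₀ ++ q₀).toFinset).erase (x, y) with hSdef
  have hmemS : ∀ e : V × V, e ≠ (x, y) → (e ∈ p ∨ e ∈ q ∨ e ∈ p₀ ∨ e ∈ q₀) → e ∈ S := by
    intro e hne hm
    refine Finset.mem_erase.mpr ⟨hne, List.mem_toFinset.mpr ?_⟩
    simp only [List.mem_append]
    tauto
  have hSsub : (↑S : Set (V × V)) ⊆ E \ {(x, y)} := by
    intro e he
    obtain ⟨hne, hmem⟩ := Finset.mem_erase.mp (Finset.mem_coe.mp he)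
    have hm := List.mem_toFinset.mp hmem
    simp only [List.mem_append] at hm
    refine ⟨?_, by simpa using hne⟩
    rcases hm with ((h' | h') | h') | h'
    · exact hp.mem_edges e h'
    · exact hq.mem_edges e h'
    · exact (hp₀.mem_edges e h').1
    · exact (hq₀.mem_edges e h').1
  have hcut : ∀ U : Set V, u ∈ U → v ∉ U → ∃ e₁ e₂ : V × V, e₁ ≠ e₂ ∧ e₁ ∈ S ∧ e₂ ∈ S ∧
      (e₁.1 ∈ U ∧ e₁.2 ∉ U) ∧ (e₂.1 ∈ U ∧ e₂.2 ∉ U) := by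
    intro U hu hv
    obtain ⟨e₁, he₁q, hc₁⟩ := walk_cross hq hv hu
    obtain ⟨e₂, he₂p, hc₂⟩ := walk_cross hp hv hu
    have hne12 : e₁ ≠ e₂ := fun h => hd he₂p (h ▸ he₁q)
    by_cases hx1 : e₁ = (x, y)
    · have hxU : x ∈ U := by rw [hx1] at hc₁; exact hc₁.1
      have hyU : y ∉ U := by rw [hx1] at hc₁; exact hc₁.2
      obtain ⟨e₃, he₃, hc₃⟩ := walk_cross hp₀ hyU hxU
      obtain ⟨e₄, he₄, hc₄⟩ := walk_cross hq₀ hyU hxU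
      have hne34 : e₃ ≠ e₄ := fun h => hd₀ he₃ (h.symm ▸ he₄)
      have h3ne : e₃ ≠ (x, y) := fun h => (hp₀.mem_edges e₃ he₃).2 (by simp [h])
      have h4ne : e₄ ≠ (x, y) := fun h => (hq₀.mem_edges e₄ he₄).2 (by simp [h])
      exact ⟨e₃, e₄, hne34, hmemS e₃ h3ne (Or.inr (Or.inr (Or.inl he₃))),
        hmemS e₄ h4ne (Or.inr (Or.inr (Or.inr he₄))), hc₃, hc₄⟩
    · by_cases hx2 : e₂ = (x, y)
      · have hxU : x ∈ U := by rw [hx2] at hc₂; exact hc₂.1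
        have hyU : y ∉ U := by rw [hx2] at hc₂; exact hc₂.2
        obtain ⟨e₃, he₃, hc₃⟩ := walk_cross hp₀ hyU hxU
        obtain ⟨e₄, he₄, hc₄⟩ := walk_cross hq₀ hyU hxU
        have hne34 : e₃ ≠ e₄ := fun h => hd₀ he₃ (h.symm ▸ he₄)
        have h3ne : e₃ ≠ (x, y) := fun h => (hp₀.mem_edges e₃ he₃).2 (by simp [h])
        have h4ne : e₄ ≠ (x, y) := fun h => (hq₀.mem_edges e₄ he₄).2 (by simp [h])
        exact ⟨e₃, e₄, hne34, hmemS e₃ h3ne (Or.inr (Or.inr (Or.inl he₃))),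
          hmemS e₄ h4ne (Or.inr (Or.inr (Or.inr he₄))), hc₃, hc₄⟩
      · exact ⟨e₁, e₂, hne12, hmemS e₁ hx1 (Or.inr (Or.inl he₁q)),
          hmemS e₂ hx2 (Or.inl he₂p), hc₁, hc₂⟩
  obtain ⟨p', q', hp', hq', hd'⟩ := two_menger huv S hcut
  exact ⟨p', q', hp'.mono' hSsub, hq'.mono' hSsub, hd'⟩

theorem stmt1 (E : Set (V × V)) (x y : V)
    (hSC : StronglyConnected E) (hxy : (x, y) ∈ E)
    (hblock : ∃ B : Set V, Is2ECBlock E B ∧ x ∈ B ∧ y ∈ B) :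
    SameBlocks (E \ {(x, y)}) E ↔ TwoEDP (E \ {(x, y)}) x y := by
  classical
  constructor
  · intro hsame
    obtain ⟨B, hB, hxB, hyB⟩ := hblock
    have hB' : Is2ECBlock (E \ {(x, y)}) B := (hsame B).mpr hB
    exact (hB'.1 x hxB y hyB).1
  · intro h2
    have hpt : ∀ a b : V, TwoEC (E \ {(x, y)}) a b ↔ TwoEC E a b := by
      intro a b
      constructor
      · rintro ⟨h1, h2'⟩
        exact ⟨h1.mono Set.diff_subset, h2'.mono Set.diff_subset⟩
      · rintro ⟨h1, h2'⟩
        exact ⟨reroute h2 h1, reroute h2 h2'⟩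
    intro B
    constructor
    · rintro ⟨hB1, hB2⟩
      exact ⟨fun a ha b hb => (hpt a b).mp (hB1 a ha b hb),
        fun C hBC hC => hB2 C hBC (fun a ha b hb => (hpt a b).mpr (hC a ha b hb))⟩
    · rintro ⟨hB1, hB2⟩
      exact ⟨fun a ha b hb => (hpt a b).mpr (hB1 a ha b hb),
        fun C hBC hC => hB2 C hBC (fun a ha b hb => (hpt a b).mp (hC a ha b hb))⟩
end

section
/- Let G be a 2-edge-connected digraph (no strong bridges) and s a vertex. Then the flow graph G(s) has two edge-disjoint spanning trees rooted at s, and the reverse flow graph G^R(s) has two edge-disjoint spanning trees rooted at s; the union of these four trees is a 2-edge-connected spanning subgraph of G with at most 4(n−1) edges, giving a 2-approximation of the smallest 2-edge-connected spanning subgraph. -/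
variable {V : Type*}

namespace Stmt11Aux

lemma walk_mono {E E' : Set (V × V)} (h : E ⊆ E') {u v : V} {p : List (V × V)}
    (hw : IsWalk E u v p) : IsWalk E' u v p := by
  induction hw with
  | nil u => exact IsWalk.nil u
  | cons he _ ih => exact IsWalk.cons (h he) ih

lemma walk_edges_mem {E : Set (V × V)} {u v : V} {p : List (V × V)}
    (hw : IsWalk E u v p) : ∀ e ∈ p, e ∈ E := by
  induction hw with
  | nil u => simp
  | cons he _ ih =>
    intro e hep
    rcases List.mem_cons.1 hep with h | h
    · exact h ▸ he
    · exact ih e h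

lemma walk_of_edges {E E' : Set (V × V)} {u v : V} {p : List (V × V)}
    (hw : IsWalk E u v p) (h : ∀ e ∈ p, e ∈ E') : IsWalk E' u v p := by
  induction hw with
  | nil u => exact IsWalk.nil u
  | cons he hp ih =>
    exact IsWalk.cons (h _ (List.mem_cons_self)) (ih fun e hep => h e (List.mem_cons_of_mem _ hep))

lemma walk_append {E : Set (V × V)} {u v w : V} {p q : List (V × V)}
    (h1 : IsWalk E u v p) (h2 : IsWalk E v w q) : IsWalk E u w (p ++ q) := by
  induction h1 with
  | nil u => simpa using h2
  | cons he _ ih => exact IsWalk.cons he (ih h2)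

lemma reaches_trans {E : Set (V × V)} {u v w : V} (h1 : Reaches E u v)
    (h2 : Reaches E v w) : Reaches E u w := by
  obtain ⟨p, hp⟩ := h1; obtain ⟨q, hq⟩ := h2
  exact ⟨p ++ q, walk_append hp hq⟩

lemma walk_snoc {E : Set (V × V)} {u v w : V} {p : List (V × V)}
    (h1 : IsWalk E u v p) (h2 : (v, w) ∈ E) : IsWalk E u w (p ++ [(v, w)]) :=
  walk_append h1 (IsWalk.cons h2 (IsWalk.nil w))

lemma reaches_mono {E E' : Set (V × V)} (h : E ⊆ E') {u v : V} (hr : Reaches E u v) :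
    Reaches E' u v := by obtain ⟨p, hp⟩ := hr; exact ⟨p, walk_mono h hp⟩

lemma reaches_rev {E : Set (V × V)} {u v : V} (h : Reaches E u v) : Reaches (revE E) v u := by
  obtain ⟨p, hp⟩ := h
  induction hp with
  | nil u => exact ⟨[], IsWalk.nil u⟩
  | @cons a b c q he _ ih =>
    obtain ⟨r, hr⟩ := ih
    exact ⟨r ++ [(b, a)], walk_snoc hr (by simpa [revE] using he)⟩

lemma revE_rev (E : Set (V × V)) : revE (revE E) = E := rfl

lemma revE_eq_swap_image (E : Set (V × V)) : revE E = Prod.swap '' E := by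
  rw [Set.image_swap_eq_preimage_swap]
  rfl

lemma mem_swap_image {T : Set (V × V)} {e : V × V} :
    e ∈ Prod.swap '' T ↔ (e.2, e.1) ∈ T := by
  rw [Set.image_swap_eq_preimage_swap]; rfl

lemma walk_cross {E : Set (V × V)} {A : Set V} {u v : V} {p : List (V × V)}
    (hw : IsWalk E u v p) (hu : u ∉ A) (hv : v ∈ A) :
    ∃ e ∈ p, e ∈ E ∧ e.1 ∉ A ∧ e.2 ∈ A := by
  induction hw with
  | nil u => exact absurd hv hu
  | @cons a b c q he hq ih =>
    by_cases hb : b ∈ A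
    · exact ⟨(a, b), List.mem_cons_self, he, hu, hb⟩
    · obtain ⟨e, hep, h1, h2, h3⟩ := ih hb hv
      exact ⟨e, List.mem_cons_of_mem _ hep, h1, h2, h3⟩

/-- Edges of `E` entering the vertex set `A`. -/
def enter (E : Set (V × V)) (A : Set V) : Set (V × V) := {e ∈ E | e.1 ∉ A ∧ e.2 ∈ A}

lemma enter_mono {E E' : Set (V × V)} (h : E ⊆ E') (A : Set V) : enter E A ⊆ enter E' A :=
  fun e ⟨he, h1, h2⟩ => ⟨h he, h1, h2⟩

lemma reaches_of_enter {E : Set (V × V)} {s : V}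
    (h : ∀ A : Set V, A.Nonempty → s ∉ A → (enter E A).Nonempty) (v : V) : Reaches E s v := by
  by_contra hv
  set A : Set V := {w | ¬ Reaches E s w} with hA
  obtain ⟨e, he, h1, h2⟩ := h A ⟨v, hv⟩ (by simp [hA]; exact ⟨[], IsWalk.nil s⟩)
  simp only [hA, Set.mem_setOf_eq, not_not] at h1 h2
  obtain ⟨p, hp⟩ := h1
  exact h2 ⟨p ++ [e], walk_snoc hp he⟩

lemma enter_nonempty_of_reaches {E : Set (V × V)} {A : Set V} {s v : V}
    (hs : s ∉ A) (hv : v ∈ A) (h : Reaches E s v) : (enter E A).Nonempty := by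
  obtain ⟨p, hp⟩ := h
  obtain ⟨e, _, h1, h2, h3⟩ := walk_cross hp hs hv
  exact ⟨e, h1, h2, h3⟩

lemma enter_submod [Fintype V] (E : Set (V × V)) (A B : Set V) :
    (enter E (A ∪ B)).ncard + (enter E (A ∩ B)).ncard ≤
      (enter E A).ncard + (enter E B).ncard := by
  classical
  have hsub1 : enter E (A ∪ B) ∪ enter E (A ∩ B) ⊆ enter E A ∪ enter E B := by
    rintro e (⟨he, h1, h2⟩ | ⟨he, h1, h2⟩)
    · rcases h2 with h2 | h2
      · exact Or.inl ⟨he, fun h => h1 (Or.inl h), h2⟩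
      · exact Or.inr ⟨he, fun h => h1 (Or.inr h), h2⟩
    · rcases (not_and_or.1 (by simpa [Set.mem_inter_iff] using h1)) with h1' | h1'
      · exact Or.inl ⟨he, h1', h2.1⟩
      · exact Or.inr ⟨he, h1', h2.2⟩
  have hsub2 : enter E (A ∪ B) ∩ enter E (A ∩ B) ⊆ enter E A ∩ enter E B := by
    rintro e ⟨⟨he, h1, _⟩, ⟨_, _, h2⟩⟩
    exact ⟨⟨he, fun h => h1 (Or.inl h), h2.1⟩, ⟨he, fun h => h1 (Or.inr h), h2.2⟩⟩
  calc (enter E (A ∪ B)).ncard + (enter E (A ∩ B)).ncard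
      = (enter E (A ∪ B) ∪ enter E (A ∩ B)).ncard + (enter E (A ∪ B) ∩ enter E (A ∩ B)).ncard := by
        rw [Set.ncard_union_add_ncard_inter]
    _ ≤ (enter E A ∪ enter E B).ncard + (enter E A ∩ enter E B).ncard :=
        Nat.add_le_add (Set.ncard_le_ncard hsub1) (Set.ncard_le_ncard hsub2)
    _ = (enter E A).ncard + (enter E B).ncard := Set.ncard_union_add_ncard_inter _ _

lemma two_enter [Fintype V] {E : Set (V × V)} (hG : Is2ECGraph E) {s : V} {A : Set V}
    (hA : A.Nonempty) (hs : s ∉ A) : 2 ≤ (enter E A).ncard := by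
  obtain ⟨v, hv⟩ := hA
  obtain ⟨e₁, he₁, h11, h12⟩ := enter_nonempty_of_reaches hs hv (hG.1 s v)
  obtain ⟨e₂, he₂, h21, h22⟩ := enter_nonempty_of_reaches hs hv (hG.2 e₁ he₁ s v)
  have : 1 < (enter E A).ncard := by
    rw [Set.one_lt_ncard_iff]
    exact ⟨e₂, e₁, ⟨he₂.1, h21, h22⟩, ⟨he₁, h11, h12⟩, fun h => he₂.2 (by simp [h])⟩
  omega


/-- A partial arborescence rooted at `s` spanning the vertex set `S`. -/
def PartialArb (E' : Set (V × V)) (s : V) (F : Set (V × V)) (S : Set V) : Prop :=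
  s ∈ S ∧ F ⊆ E' ∧ (∀ e ∈ F, e.1 ∈ S ∧ e.2 ∈ S ∧ e.2 ≠ s) ∧
    (∀ v ∈ S, v ≠ s → ∃! e, e ∈ F ∧ e.2 = v) ∧ (∀ v ∈ S, Reaches F s v)

lemma partialArb_insert {E' : Set (V × V)} {s : V} {F : Set (V × V)} {S : Set V} {a b : V}
    (h : PartialArb E' s F S) (hab : (a, b) ∈ E') (ha : a ∈ S) (hb : b ∉ S) :
    PartialArb E' s (F ∪ {(a, b)}) (S ∪ {b}) := by
  obtain ⟨hsS, hFE, hends, huniq, hreach⟩ := h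
  have hbs : b ≠ s := fun h => hb (h ▸ hsS)
  refine ⟨Or.inl hsS, ?_, ?_, ?_, ?_⟩
  · rintro e (he | he)
    · exact hFE he
    · simpa using he ▸ hab
  · rintro e (he | he)
    · obtain ⟨h1, h2, h3⟩ := hends e he
      exact ⟨Or.inl h1, Or.inl h2, h3⟩
    · simp only [Set.mem_singleton_iff] at he
      subst he
      exact ⟨Or.inl ha, Or.inr rfl, hbs⟩
  · rintro v (hv | hv) hvs
    · obtain ⟨e, ⟨he1, he2⟩, hu⟩ := huniq v hv hvs
      refine ⟨e, ⟨Or.inl he1, he2⟩, ?_⟩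
      rintro e' ⟨(he' | he'), he'2⟩
      · exact hu e' ⟨he', he'2⟩
      · simp only [Set.mem_singleton_iff] at he'
        rw [he'] at he'2
        have : b = v := he'2
        exact absurd (this ▸ hv) hb
    · simp only [Set.mem_singleton_iff] at hv
      rw [hv]
      refine ⟨(a, b), ⟨Or.inr rfl, rfl⟩, ?_⟩
      rintro e' ⟨(he' | he'), he'2⟩
      · have hb' : e'.2 ∈ S := (hends e' he').2.1
        rw [he'2] at hb'
        exact absurd hb' hb
      · exact he'
  · rintro v (hv | hv)
    · exact reaches_mono Set.subset_union_left (hreach v hv)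
    · simp only [Set.mem_singleton_iff] at hv
      rw [hv]
      obtain ⟨p, hp⟩ := hreach a ha
      exact ⟨p ++ [(a, b)], walk_snoc (walk_mono Set.subset_union_left hp) (Or.inr rfl)⟩

lemma isSpanningTree_of_partialArb {E' : Set (V × V)} {s : V} {T : Set (V × V)}
    (h : PartialArb E' s T Set.univ) : IsSpanningTree E' s T := by
  obtain ⟨_, hTE, hends, huniq, hreach⟩ := h
  exact ⟨hTE, fun v => hreach v (Set.mem_univ v), fun v hv => huniq v (Set.mem_univ v) hv,
    fun e he => (hends e he).2.2⟩

lemma partialArb_init {E' : Set (V × V)} (s : V) : PartialArb E' s ∅ {s} := by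
  refine ⟨rfl, Set.empty_subset _, by simp, ?_, ?_⟩
  · rintro v hv hvs
    exact absurd hv hvs
  · rintro v hv
    rw [Set.mem_singleton_iff] at hv
    rw [hv]
    exact ⟨[], IsWalk.nil s⟩

/-- Invariant: after removing `F`, every set avoiding `s` still has an entering edge. -/
def Inv (E' F : Set (V × V)) (s : V) : Prop :=
  ∀ A : Set V, A.Nonempty → s ∉ A → (enter (E' \ F) A).Nonempty

lemma enter_diff_singleton (E₀ : Set (V × V)) (e : V × V) (A : Set V) :
    enter (E₀ \ {e}) A = enter E₀ A \ {e} := by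
  ext f
  simp only [enter, Set.mem_diff, Set.mem_setOf_eq, Set.mem_singleton_iff]
  tauto

lemma extend_inv [Fintype V] {E' : Set (V × V)} {s : V}
    (H2 : ∀ A : Set V, A.Nonempty → s ∉ A → 2 ≤ (enter E' A).ncard)
    {F : Set (V × V)} {S : Set V} (hF : PartialArb E' s F S) (hInv : Inv E' F s)
    (hS : S ≠ Set.univ) :
    ∃ a b, (a, b) ∈ E' \ F ∧ a ∈ S ∧ b ∉ S ∧
      PartialArb E' s (F ∪ {(a, b)}) (S ∪ {b}) ∧ Inv E' (F ∪ {(a, b)}) s := by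
  classical
  -- key fact: adding a suitable edge preserves the invariant
  have hdiff : ∀ (e : V × V), E' \ (F ∪ {e}) = (E' \ F) \ {e} := by
    intro e; ext f; simp only [Set.mem_diff, Set.mem_union, Set.mem_singleton_iff]; tauto
  set Tight : Set V → Prop := fun B => B.Nonempty ∧ s ∉ B ∧ (enter (E' \ F) B).ncard ≤ 1
    with hTight
  by_cases hcase : ∃ B, Tight B ∧ (B \ S).Nonempty
  · -- pick a tight set of minimal cardinality among those leaving S
    set P : Set ℕ := {k | ∃ B, Tight B ∧ (B \ S).Nonempty ∧ B.ncard = k} with hP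
    have hPne : P.Nonempty := by
      obtain ⟨B, h1, h2⟩ := hcase
      exact ⟨B.ncard, B, h1, h2, rfl⟩
    obtain ⟨B, hBt, hBS, hBcard⟩ := Nat.sInf_mem hPne
    have hmin : ∀ C, Tight C → (C \ S).Nonempty → B.ncard ≤ C.ncard := by
      intro C h1 h2
      rw [hBcard]
      exact Nat.sInf_le ⟨C, h1, h2, rfl⟩
    obtain ⟨hBne, hBs, hBle⟩ := hBt
    -- edges entering B \ S are untouched by F
    have hsB : s ∉ B \ S := fun h => hBs h.1
    have heq : enter (E' \ F) (B \ S) = enter E' (B \ S) := by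
      apply Set.Subset.antisymm (enter_mono (Set.diff_subset) _)
      rintro e ⟨he, h1, h2⟩
      refine ⟨⟨he, fun heF => ?_⟩, h1, h2⟩
      exact h2.2 ((hF.2.2.1 e heF).2.1)
    have h2BS : 2 ≤ (enter (E' \ F) (B \ S)).ncard := by
      rw [heq]; exact H2 _ hBS hsB
    -- find an edge entering B \ S but not entering B: its tail is in B ∩ S
    have hex : ∃ e ∈ enter (E' \ F) (B \ S), e ∉ enter (E' \ F) B := by
      by_contra hno
      push_neg at hno
      have := Set.ncard_le_ncard hno (Set.toFinite _)
      omega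
    obtain ⟨e, ⟨heE, he1, he2⟩, hne⟩ := hex
    have heB : e.1 ∈ B := by
      by_contra h
      exact hne ⟨heE, h, he2.1⟩
    have heS : e.1 ∈ S := by
      by_contra h
      exact he1 ⟨heB, h⟩
    refine ⟨e.1, e.2, heE, heS, he2.2, partialArb_insert hF (Set.diff_subset heE) heS he2.2, ?_⟩
    -- invariant preservation
    intro A' hA'ne hA's
    rw [show ((e.1, e.2) : V × V) = e from rfl, hdiff, enter_diff_singleton]
    by_contra hempty
    rw [Set.not_nonempty_iff_eq_empty, Set.diff_eq_empty] at hempty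
    have hAin : e ∈ enter (E' \ F) A' := by
      obtain ⟨f, hf⟩ := hInv A' hA'ne hA's
      have := hempty hf
      simp only [Set.mem_singleton_iff] at this
      exact this ▸ hf
    have hA'le : (enter (E' \ F) A').ncard ≤ 1 := by
      have := Set.ncard_le_ncard hempty (Set.toFinite _)
      simpa using this
    -- A' ∩ B is tight and leaves S; by minimality A' ∩ B = B, so e.1 ∈ A', contradiction
    have hABne : (A' ∩ B).Nonempty := ⟨e.2, hAin.2.2, he2.1⟩
    have hABs : s ∉ A' ∩ B := fun h => hA's h.1
    have hUs : s ∉ A' ∪ B := by rintro (h | h); exacts [hA's h, hBs h]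
    have hUne : (A' ∪ B).Nonempty := ⟨e.2, Or.inr he2.1⟩
    have hU1 : 1 ≤ (enter (E' \ F) (A' ∪ B)).ncard :=
      (Set.ncard_pos (Set.toFinite _)).2 (hInv (A' ∪ B) hUne hUs)
    have hsm := enter_submod (E' \ F) A' B
    have hABle : (enter (E' \ F) (A' ∩ B)).ncard ≤ 1 := by omega
    have hABSne : ((A' ∩ B) \ S).Nonempty := ⟨e.2, ⟨hAin.2.2, he2.1⟩, he2.2⟩
    have hle := hmin _ ⟨hABne, hABs, hABle⟩ hABSne
    have heqB : A' ∩ B = B :=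
      Set.eq_of_subset_of_ncard_le Set.inter_subset_right hle (Set.toFinite _)
    have hBA : B ⊆ A' := by rw [← heqB]; exact Set.inter_subset_left
    exact hAin.2.1 (hBA heB)
  · -- no tight set leaves S: any edge of E' \ F leaving S works
    push_neg at hcase
    obtain ⟨v, hv⟩ := Set.ne_univ_iff_exists_notMem S |>.1 hS
    have hSc : (Sᶜ : Set V).Nonempty := ⟨v, hv⟩
    obtain ⟨e, heE, he1, he2⟩ := hInv Sᶜ hSc (fun h => h hF.1)
    rw [Set.notMem_compl_iff] at he1
    rw [Set.mem_compl_iff] at he2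
    refine ⟨e.1, e.2, heE, he1, he2, partialArb_insert hF (Set.diff_subset heE) he1 he2, ?_⟩
    intro A' hA'ne hA's
    rw [show ((e.1, e.2) : V × V) = e from rfl, hdiff, enter_diff_singleton]
    by_contra hempty
    rw [Set.not_nonempty_iff_eq_empty, Set.diff_eq_empty] at hempty
    have hAin : e ∈ enter (E' \ F) A' := by
      obtain ⟨f, hf⟩ := hInv A' hA'ne hA's
      have := hempty hf
      simp only [Set.mem_singleton_iff] at this
      exact this ▸ hf
    have hA'le : (enter (E' \ F) A').ncard ≤ 1 := by
      have := Set.ncard_le_ncard hempty (Set.toFinite _)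
      simpa using this
    have h0 := hcase A' ⟨hA'ne, hA's, hA'le⟩
    have hmem : e.2 ∈ A' \ S := ⟨hAin.2.2, he2⟩
    rw [h0] at hmem
    exact hmem


lemma ncard_insert {S : Set V} {b : V} (hb : b ∉ S) (hfin : S.Finite) :
    (S ∪ {b}).ncard = S.ncard + 1 := by
  rw [Set.union_singleton, Set.ncard_insert_of_notMem hb hfin]

lemma build_T1_aux [Fintype V] {E' : Set (V × V)} {s : V}
    (H2 : ∀ A : Set V, A.Nonempty → s ∉ A → 2 ≤ (enter E' A).ncard) :
    ∀ (k : ℕ) (F : Set (V × V)) (S : Set V), Fintype.card V ≤ S.ncard + k →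
      PartialArb E' s F S → Inv E' F s →
      ∃ T, PartialArb E' s T Set.univ ∧ Inv E' T s := by
  intro k
  induction k with
  | zero =>
    intro F S hcard hF hInv
    have : S = Set.univ :=
      Set.eq_of_subset_of_ncard_le (Set.subset_univ S)
        (by rwa [Set.ncard_univ, Nat.card_eq_fintype_card]) (Set.toFinite _)
    exact ⟨F, this ▸ hF, hInv⟩
  | succ k ih =>
    intro F S hcard hF hInv
    by_cases hS : S = Set.univ
    · exact ⟨F, hS ▸ hF, hInv⟩
    · obtain ⟨a, b, _, _, hb, hF', hInv'⟩ := extend_inv H2 hF hInv hS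
      apply ih (F ∪ {(a, b)}) (S ∪ {b}) _ hF' hInv'
      rw [ncard_insert hb (Set.toFinite _)]
      omega

lemma build_T1 [Fintype V] {E' : Set (V × V)} {s : V}
    (H2 : ∀ A : Set V, A.Nonempty → s ∉ A → 2 ≤ (enter E' A).ncard) :
    ∃ T, IsSpanningTree E' s T ∧ Inv E' T s := by
  have hInv0 : Inv E' (∅ : Set (V × V)) s := by
    intro A hA hs
    apply Set.nonempty_of_ncard_ne_zero
    have h2 := H2 A hA hs
    have : enter (E' \ ∅) A = enter E' A := by rw [Set.diff_empty]
    rw [this]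
    omega
  obtain ⟨T, hT, hInv⟩ := build_T1_aux H2 (Fintype.card V) ∅ {s}
    (by simp) (partialArb_init s) hInv0
  exact ⟨T, isSpanningTree_of_partialArb hT, hInv⟩

lemma build_simple_aux [Fintype V] {E' : Set (V × V)} {s : V}
    (hreach : ∀ v, Reaches E' s v) :
    ∀ (k : ℕ) (F : Set (V × V)) (S : Set V), Fintype.card V ≤ S.ncard + k →
      PartialArb E' s F S → ∃ T, PartialArb E' s T Set.univ := by
  intro k
  induction k with
  | zero =>
    intro F S hcard hF
    have : S = Set.univ :=
      Set.eq_of_subset_of_ncard_le (Set.subset_univ S)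
        (by rwa [Set.ncard_univ, Nat.card_eq_fintype_card]) (Set.toFinite _)
    exact ⟨F, this ▸ hF⟩
  | succ k ih =>
    intro F S hcard hF
    by_cases hS : S = Set.univ
    · exact ⟨F, hS ▸ hF⟩
    · obtain ⟨v, hv⟩ := Set.ne_univ_iff_exists_notMem S |>.1 hS
      obtain ⟨p, hp⟩ := hreach v
      obtain ⟨e, _, heE, he1, he2⟩ := walk_cross hp (show s ∉ (Sᶜ : Set V) from fun h => h hF.1)
        (Set.mem_compl hv)
      rw [Set.notMem_compl_iff] at he1
      rw [Set.mem_compl_iff] at he2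
      have hF' : PartialArb E' s (F ∪ {(e.1, e.2)}) (S ∪ {e.2}) :=
        partialArb_insert hF heE he1 he2
      apply ih _ _ _ hF'
      rw [ncard_insert he2 (Set.toFinite _)]
      omega

lemma build_simple [Fintype V] {E' : Set (V × V)} {s : V}
    (hreach : ∀ v, Reaches E' s v) : ∃ T, IsSpanningTree E' s T := by
  obtain ⟨T, hT⟩ := build_simple_aux hreach (Fintype.card V) ∅ {s} (by simp) (partialArb_init s)
  exact ⟨T, isSpanningTree_of_partialArb hT⟩

lemma spanningTree_mono {E₀ E₁ : Set (V × V)} {s : V} {T : Set (V × V)}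
    (h : IsSpanningTree E₀ s T) (hE : E₀ ⊆ E₁) : IsSpanningTree E₁ s T :=
  ⟨h.1.trans hE, h.2.1, h.2.2.1, h.2.2.2⟩

/-- Main existence: two edge-disjoint spanning trees. -/
lemma exists_two_trees [Fintype V] {E : Set (V × V)} (hG : Is2ECGraph E) (s : V) :
    ∃ T₁ T₂ : Set (V × V), IsSpanningTree E s T₁ ∧ IsSpanningTree E s T₂ ∧
      Disjoint T₁ T₂ := by
  have H2 : ∀ A : Set V, A.Nonempty → s ∉ A → 2 ≤ (enter E A).ncard :=
    fun A hA hs => two_enter hG hA hs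
  obtain ⟨T₁, hT₁, hInv⟩ := build_T1 H2
  have hreach : ∀ v, Reaches (E \ T₁) s v := reaches_of_enter hInv
  obtain ⟨T₂, hT₂⟩ := build_simple hreach
  refine ⟨T₁, T₂, hT₁, spanningTree_mono hT₂ Set.diff_subset, ?_⟩
  rw [Set.disjoint_left]
  intro e he1 he2
  exact (hT₂.1 he2).2 he1


lemma revE_diff (E : Set (V × V)) (e : V × V) :
    revE E \ {e} = revE (E \ {(e.2, e.1)}) := by
  ext f
  simp only [revE, Set.mem_diff, Set.mem_setOf_eq, Set.mem_singleton_iff, Prod.ext_iff]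
  tauto

lemma rev_2EC {E : Set (V × V)} (hG : Is2ECGraph E) : Is2ECGraph (revE E) := by
  constructor
  · intro u v
    exact reaches_rev (hG.1 v u)
  · intro e he u v
    rw [revE_diff]
    exact reaches_rev (hG.2 (e.2, e.1) he v u)

lemma swap_image_subset_of_rev {E T : Set (V × V)} (h : T ⊆ revE E) :
    Prod.swap '' T ⊆ E := by
  intro e he
  rw [mem_swap_image] at he
  exact h he

/-- given walks in two disjoint subgraphs of `D`, one avoids any fixed edge. -/
lemma walk_avoid {D A B : Set (V × V)} (hA : A ⊆ D) (hB : B ⊆ D) (hAB : Disjoint A B)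
    {x y : V} {p q : List (V × V)} (hp : IsWalk A x y p) (hq : IsWalk B x y q)
    (e : V × V) : Reaches (D \ {e}) x y := by
  by_cases heA : e ∈ A
  · refine ⟨q, walk_of_edges hq fun f hf => ⟨hB (walk_edges_mem hq f hf), ?_⟩⟩
    intro hfe
    rw [Set.mem_singleton_iff] at hfe
    subst hfe
    exact Set.disjoint_left.1 hAB heA (walk_edges_mem hq f hf)
  · refine ⟨p, walk_of_edges hp fun f hf => ⟨hA (walk_edges_mem hp f hf), ?_⟩⟩
    intro hfe
    rw [Set.mem_singleton_iff] at hfe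
    subst hfe
    exact heA (walk_edges_mem hp f hf)

lemma union_is2EC {E : Set (V × V)} {s : V} {T₁ T₂ T₃ T₄ : Set (V × V)}
    (h1 : IsSpanningTree E s T₁) (h2 : IsSpanningTree E s T₂) (h12 : Disjoint T₁ T₂)
    (h3 : IsSpanningTree (revE E) s T₃) (h4 : IsSpanningTree (revE E) s T₄)
    (h34 : Disjoint T₃ T₄) :
    Is2ECGraph (T₁ ∪ T₂ ∪ Prod.swap '' (T₃ ∪ T₄)) := by
  set D := T₁ ∪ T₂ ∪ Prod.swap '' (T₃ ∪ T₄) with hD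
  have hT1D : T₁ ⊆ D := Set.subset_union_left.trans Set.subset_union_left
  have hT2D : T₂ ⊆ D := Set.subset_union_right.trans Set.subset_union_left
  have hT3D : Prod.swap '' T₃ ⊆ D :=
    (Set.image_mono Set.subset_union_left).trans Set.subset_union_right
  have hT4D : Prod.swap '' T₄ ⊆ D :=
    (Set.image_mono Set.subset_union_right).trans Set.subset_union_right
  have h34' : Disjoint (Prod.swap '' T₃) (Prod.swap '' T₄) :=
    (Set.disjoint_image_iff Prod.swap_injective).2 h34
  -- reverse reachability: from T₃ (or T₄) walks to s
  have hback : ∀ (T : Set (V × V)), IsSpanningTree (revE E) s T →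
      ∀ u, Reaches (Prod.swap '' T) u s := by
    intro T hT u
    have := reaches_rev (E := T) (hT.2.1 u)
    rwa [revE_eq_swap_image] at this
  constructor
  · intro u v
    exact reaches_trans
      (reaches_mono hT3D (hback T₃ h3 u))
      (reaches_mono hT1D (h1.2.1 v))
  · intro e _ u v
    obtain ⟨p3, hp3⟩ := hback T₃ h3 u
    obtain ⟨p4, hp4⟩ := hback T₄ h4 u
    obtain ⟨q1, hq1⟩ := h1.2.1 v
    obtain ⟨q2, hq2⟩ := h2.2.1 v
    exact reaches_trans (walk_avoid hT3D hT4D h34' hp3 hp4 e)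
      (walk_avoid hT1D hT2D h12 hq1 hq2 e)

lemma tree_ncard_le [Fintype V] {E₀ : Set (V × V)} {s : V} {T : Set (V × V)}
    (h : IsSpanningTree E₀ s T) : T.ncard ≤ Fintype.card V - 1 := by
  classical
  have hinj : Set.InjOn Prod.snd T := by
    intro e he e' he' hee
    have hes : e.2 ≠ s := h.2.2.2 e he
    obtain ⟨f, _, hu⟩ := h.2.2.1 e.2 hes
    have h1 := hu e ⟨he, rfl⟩
    have h2 := hu e' ⟨he', hee.symm⟩
    rw [h1, h2]
  have hmaps : ∀ e ∈ T, e.2 ∈ ({s}ᶜ : Set V) := fun e he => h.2.2.2 e he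
  have hle : T.ncard ≤ (({s}ᶜ : Set V)).ncard :=
    Set.ncard_le_ncard_of_injOn Prod.snd hmaps hinj (Set.toFinite _)
  have hc : ({s} : Set V).ncard + ({s}ᶜ : Set V).ncard = Fintype.card V := by
    rw [Set.ncard_add_ncard_compl, Nat.card_eq_fintype_card]
  have h1 : ({s} : Set V).ncard = 1 := Set.ncard_singleton s
  omega

lemma union_ncard_le [Fintype V] {E : Set (V × V)} {s : V} {T₁ T₂ T₃ T₄ : Set (V × V)}
    (h1 : IsSpanningTree E s T₁) (h2 : IsSpanningTree E s T₂)
    (h3 : IsSpanningTree (revE E) s T₃) (h4 : IsSpanningTree (revE E) s T₄) :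
    (T₁ ∪ T₂ ∪ Prod.swap '' (T₃ ∪ T₄)).ncard ≤ 4 * (Fintype.card V - 1) := by
  have hA : (T₁ ∪ T₂ ∪ Prod.swap '' (T₃ ∪ T₄)).ncard ≤
      (T₁ ∪ T₂).ncard + (Prod.swap '' (T₃ ∪ T₄)).ncard := Set.ncard_union_le _ _
  have hB : (T₁ ∪ T₂).ncard ≤ T₁.ncard + T₂.ncard := Set.ncard_union_le _ _
  have hC : (Prod.swap '' (T₃ ∪ T₄)).ncard = (T₃ ∪ T₄).ncard :=
    Set.ncard_image_of_injective _ Prod.swap_injective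
  have hDl : (T₃ ∪ T₄).ncard ≤ T₃.ncard + T₄.ncard := Set.ncard_union_le _ _
  have c1 := tree_ncard_le h1
  have c2 := tree_ncard_le h2
  have c3 := tree_ncard_le h3
  have c4 := tree_ncard_le h4
  omega

lemma lower_bound [Fintype V] {F : Set (V × V)} (hF : Is2ECGraph F)
    (h2 : 2 ≤ Fintype.card V) : 2 * Fintype.card V ≤ F.ncard := by
  classical
  have hdeg : ∀ v : V, ∃ e₁ e₂ : V × V, e₁ ∈ F ∧ e₂ ∈ F ∧ e₁ ≠ e₂ ∧ e₁.2 = v ∧ e₂.2 = v := by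
    intro v
    obtain ⟨u, hu⟩ := Fintype.exists_ne_of_one_lt_card (by omega) v
    obtain ⟨p, hp⟩ := hF.1 u v
    obtain ⟨e₁, _, he₁, _, he₁2⟩ := walk_cross (A := {v}) hp hu rfl
    obtain ⟨q, hq⟩ := hF.2 e₁ he₁ u v
    obtain ⟨e₂, _, he₂, _, he₂2⟩ := walk_cross (A := {v}) hq hu rfl
    exact ⟨e₂, e₁, he₂.1, he₁, fun h => he₂.2 (by simp [h]), he₂2, he₁2⟩
  choose f₁ f₂ hf₁ hf₂ hne hh₁ hh₂ using hdeg
  set g : V × Bool → V × V := fun x => if x.2 then f₁ x.1 else f₂ x.1 with hg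
  have hgF : ∀ x : V × Bool, x ∈ (Finset.univ : Finset (V × Bool)) → g x ∈ F.toFinset := by
    intro x _
    rw [Set.mem_toFinset]
    by_cases hb : x.2 <;> simp [hg, hb, hf₁, hf₂]
  have hginj : Set.InjOn g (Finset.univ : Finset (V × Bool)) := by
    intro x _ y _ hxy
    have hhead : ∀ z : V × Bool, (g z).2 = z.1 := by
      intro z
      by_cases hb : z.2 <;> simp [hg, hb, hh₁, hh₂]
    have h1 : x.1 = y.1 := by rw [← hhead x, ← hhead y, hxy]
    have h2 : x.2 = y.2 := by
      by_contra hne2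
      rcases Bool.eq_false_or_eq_true x.2 with hx | hx <;>
        rcases Bool.eq_false_or_eq_true y.2 with hy | hy
      · exact hne2 (hx.trans hy.symm)
      · simp only [hg, hx, hy, if_false, if_true, Bool.false_eq_true, Bool.true_eq_false] at hxy
        rw [h1] at hxy
        exact hne y.1 hxy
      · simp only [hg, hx, hy, if_false, if_true, Bool.false_eq_true, Bool.true_eq_false] at hxy
        rw [h1] at hxy
        exact hne y.1 hxy.symm
      · exact hne2 (hx.trans hy.symm)
    exact Prod.ext h1 h2
  have := Finset.card_le_card_of_injOn g hgF hginj
  rw [Finset.card_univ, Fintype.card_prod, Fintype.card_bool] at this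
  rw [Set.ncard_eq_toFinset_card']
  omega


end Stmt11Aux

theorem stmt11 [Fintype V] (E : Set (V × V)) (s : V) (hG : Is2ECGraph E)
    (n : ℕ) (hn : n = Fintype.card V) :
    (∃ T₁ T₂ : Set (V × V), IsSpanningTree E s T₁ ∧ IsSpanningTree E s T₂ ∧
      Disjoint T₁ T₂) ∧
    (∃ T₃ T₄ : Set (V × V), IsSpanningTree (revE E) s T₃ ∧
      IsSpanningTree (revE E) s T₄ ∧ Disjoint T₃ T₄) ∧
    ∀ T₁ T₂ T₃ T₄ : Set (V × V),
      IsSpanningTree E s T₁ → IsSpanningTree E s T₂ → Disjoint T₁ T₂ →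
      IsSpanningTree (revE E) s T₃ → IsSpanningTree (revE E) s T₄ → Disjoint T₃ T₄ →
      Is2ECGraph (T₁ ∪ T₂ ∪ Prod.swap '' (T₃ ∪ T₄)) ∧
      (T₁ ∪ T₂ ∪ Prod.swap '' (T₃ ∪ T₄)) ⊆ E ∧
      (T₁ ∪ T₂ ∪ Prod.swap '' (T₃ ∪ T₄)).ncard ≤ 4 * (n - 1) ∧
      ∀ F : Set (V × V), F ⊆ E → Is2ECGraph F →
        (T₁ ∪ T₂ ∪ Prod.swap '' (T₃ ∪ T₄)).ncard ≤ 2 * F.ncard := by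
  classical
  have hGrev := Stmt11Aux.rev_2EC hG
  refine ⟨Stmt11Aux.exists_two_trees hG s, Stmt11Aux.exists_two_trees hGrev s, ?_⟩
  intro T₁ T₂ T₃ T₄ h1 h2 h12 h3 h4 h34
  have hsub : (T₁ ∪ T₂ ∪ Prod.swap '' (T₃ ∪ T₄)) ⊆ E :=
    Set.union_subset (Set.union_subset h1.1 h2.1)
      (Stmt11Aux.swap_image_subset_of_rev (Set.union_subset h3.1 h4.1))
  have hcard := Stmt11Aux.union_ncard_le h1 h2 h3 h4
  refine ⟨Stmt11Aux.union_is2EC h1 h2 h12 h3 h4 h34, hsub, by rw [hn]; exact hcard, ?_⟩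
  intro F _ hF2
  by_cases hv : 2 ≤ Fintype.card V
  · have hlb := Stmt11Aux.lower_bound hF2 hv
    omega
  · omega
end
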